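/- arXiv:0909.0637 — 2 statements merged into one kernel-verified Lean document; each statement's English description precedes it below -/
import Mathlib

section
/- Let ρ_d > 0, b > 0, let ω : [0, ∞) → (0, ∞) be continuous and bounded, and let α : [0,1] × [0, ∞) → (0, ∞) be continuous, bounded, and nonincreasing in its second argument. Assume there exists Ã > 0 such that for all A ≥ Ã, ∫₀¹ α(x, A)·exp( (1/ρ_d)·∫₀ˣ (b − α(y, A)) dy ) dx < ρ_d. Then every nonnegative C¹ solution (A*(t), Ω*(x,t)) of the Approximation 3 system on t ≥ 0 remains bounded for all time: sup_{t ≥ 0} A*(t) < ∞ and sup_{t ≥ 0, x ∈ [0,1]} Ω*(x,t) < ∞. -/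
open Real Set MeasureTheory intervalIntegral

section Aux

lemma my_ext {X : Type*} [TopologicalSpace X] [NormalSpace X] {s : Set X} (hs : IsClosed s)
    {f : X → ℝ} (hf : ContinuousOn f s) :
    ∃ g : X → ℝ, Continuous g ∧ ∀ x ∈ s, g x = f x := by
  obtain ⟨g, hg⟩ := ContinuousMap.exists_restrict_eq (Y := ℝ) hs ⟨s.restrict f, hf.restrict⟩
  refine ⟨g, g.continuous, fun x hx => ?_⟩
  have := congrArg (fun h : C(s, ℝ) => h ⟨x, hx⟩) hg
  exact this

lemma my_swap {F : ℝ → ℝ → ℝ} (hF : Continuous (Function.uncurry F)) {a b c d : ℝ}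
    (hab : a ≤ b) (hcd : c ≤ d) :
    (∫ x in a..b, (∫ t in c..d, F x t)) = ∫ t in c..d, (∫ x in a..b, F x t) := by
  have h1 : MeasureTheory.IntegrableOn (Function.uncurry F) (Set.Icc a b ×ˢ Set.Icc c d) :=
    hF.continuousOn.integrableOn_compact (isCompact_Icc.prod isCompact_Icc)
  have h2 : MeasureTheory.IntegrableOn (Function.uncurry F) (Set.Ioc a b ×ˢ Set.Ioc c d) :=
    h1.mono_set (Set.prod_mono Set.Ioc_subset_Icc_self Set.Ioc_subset_Icc_self)
  have h3 : MeasureTheory.Integrable (Function.uncurry F)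
      ((volume.restrict (Set.Ioc a b)).prod (volume.restrict (Set.Ioc c d))) := by
    rw [MeasureTheory.Measure.prod_restrict]
    rwa [MeasureTheory.IntegrableOn, MeasureTheory.Measure.volume_eq_prod] at h2
  have := MeasureTheory.integral_integral_swap h3
  simp only [intervalIntegral.integral_of_le hab, intervalIntegral.integral_of_le hcd]
  exact this

lemma my_ftc1 {c : ℝ → ℝ} (hc : Continuous c) (x : ℝ) :
    HasDerivAt (fun u => ∫ y in (0:ℝ)..u, c y) (c x) x :=
  intervalIntegral.integral_hasDerivAt_right (hc.intervalIntegrable _ _)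
    (hc.stronglyMeasurable.stronglyMeasurableAtFilter) hc.continuousAt

lemma my_prim_cont {c : ℝ → ℝ} (hc : Continuous c) :
    Continuous (fun u => ∫ y in (0:ℝ)..u, c y) :=
  continuous_iff_continuousAt.2 fun x => (my_ftc1 hc x).continuousAt

lemma my_ode_solve {c : ℝ → ℝ} (hc : Continuous c) {g : ℝ → ℝ}
    (hg : ContinuousOn g (Icc 0 1))
    (hder : ∀ x ∈ Icc (0:ℝ) 1, HasDerivWithinAt g (c x * g x) (Icc 0 1) x)
    {x : ℝ} (hx : x ∈ Icc (0:ℝ) 1) :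
    g x = g 0 * Real.exp (∫ y in (0:ℝ)..x, c y) := by
  set H : ℝ → ℝ := fun u => ∫ y in (0:ℝ)..u, c y with hH
  have hHd : ∀ u : ℝ, HasDerivAt H (c u) u := my_ftc1 hc
  set h : ℝ → ℝ := fun u => g u * Real.exp (-H u) with hh
  have hcont : ContinuousOn h (Icc 0 1) :=
    hg.mul (((my_prim_cont hc).neg.rexp).continuousOn)
  have hder0 : ∀ u ∈ Ico (0:ℝ) 1, HasDerivWithinAt h 0 (Ici u) u := by
    intro u hu
    have hu' : u ∈ Icc (0:ℝ) 1 := ⟨hu.1, hu.2.le⟩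
    have h1 : HasDerivWithinAt h
        (c u * g u * Real.exp (-H u) + g u * (Real.exp (-H u) * -c u)) (Icc 0 1) u :=
      (hder u hu').mul (((hHd u).neg.exp).hasDerivWithinAt)
    have h2 : (c u * g u * Real.exp (-H u) + g u * (Real.exp (-H u) * -c u)) = 0 := by ring
    rw [h2] at h1
    have hmem : Icc (0:ℝ) 1 ∈ nhdsWithin u (Ici u) := by
      have : Ici u ∩ Iio 1 ⊆ Icc 0 1 := fun z hz => ⟨hu.1.trans hz.1, hz.2.le⟩
      exact mem_nhdsWithin.2 ⟨Iio 1, isOpen_Iio, hu.2, fun z hz => this ⟨hz.2, hz.1⟩⟩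
    exact h1.mono_of_mem_nhdsWithin hmem
  have := constant_of_has_deriv_right_zero hcont hder0 x hx
  have hH0 : H 0 = 0 := by simp [hH]
  have hexp : Real.exp (-H x) ≠ 0 := Real.exp_ne_zero _
  have : g x * Real.exp (-H x) = g 0 := by simpa [hh, hH0] using this
  have := congrArg (fun z => z * Real.exp (H x)) this
  simpa [mul_assoc, ← Real.exp_add] using this

lemma my_ftc_id {ρ b : ℝ} (hρ : 0 < ρ) {c : ℝ → ℝ} (hc : Continuous c) :
    (∫ x in (0:ℝ)..1, c x * Real.exp ((1/ρ) * ∫ y in (0:ℝ)..x, (b - c y)))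
      = b * (∫ x in (0:ℝ)..1, Real.exp ((1/ρ) * ∫ y in (0:ℝ)..x, (b - c y)))
        + ρ * (1 - Real.exp ((1/ρ) * ∫ y in (0:ℝ)..1, (b - c y))) := by
  set H : ℝ → ℝ := fun u => ∫ y in (0:ℝ)..u, (b - c y) with hHdef
  have hbc : Continuous (fun y => b - c y) := continuous_const.sub hc
  set u : ℝ → ℝ := fun x => Real.exp ((1/ρ) * H x) with hudef
  have hu : Continuous u := (continuous_const.mul (my_prim_cont hbc)).rexp
  have hder : ∀ x ∈ uIcc (0:ℝ) 1, HasDerivAt (fun z => -ρ * u z) ((c x - b) * u x) x := by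
    intro x _
    have h1 : HasDerivAt (fun z => (1/ρ) * H z) ((1/ρ) * (b - c x)) x :=
      (my_ftc1 hbc x).const_mul _
    have h2 : HasDerivAt u (Real.exp ((1/ρ) * H x) * ((1/ρ) * (b - c x))) x := h1.exp
    have h3 := h2.const_mul (-ρ)
    refine h3.congr_deriv ?_
    show _ = (c x - b) * Real.exp ((1/ρ) * H x)
    have hρ1 : ρ * (1/ρ) = 1 := by field_simp
    linear_combination (-(Real.exp ((1/ρ) * H x) * (b - c x))) * hρ1
  have hint : IntervalIntegrable (fun x => (c x - b) * u x) volume 0 1 :=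
    ((hc.sub continuous_const).mul hu).intervalIntegrable _ _
  have key := intervalIntegral.integral_eq_sub_of_hasDerivAt hder hint
  have hu0 : u 0 = 1 := by simp [hudef, hHdef]
  have hsplit : (∫ x in (0:ℝ)..1, (c x - b) * u x)
      = (∫ x in (0:ℝ)..1, c x * u x) - b * ∫ x in (0:ℝ)..1, u x := by
    rw [← intervalIntegral.integral_const_mul, ← intervalIntegral.integral_sub (f := fun x => c x * u x) (g := fun x => b * u x)
      ((hc.mul hu).intervalIntegrable _ _) ((continuous_const.mul hu).intervalIntegrable _ _)]
    congr 1
    ext x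
    ring
  rw [hsplit, hu0] at key
  have : (∫ x in (0:ℝ)..1, c x * u x) - b * ∫ x in (0:ℝ)..1, u x = -ρ * u 1 + ρ := by
    linarith [key]
  have hfin : (∫ x in (0:ℝ)..1, c x * u x)
      = b * (∫ x in (0:ℝ)..1, u x) + ρ * (1 - u 1) := by linarith [this]
  simpa [hudef, hHdef] using hfin
lemma my_char_deriv {ρ : ℝ} (hρ : 0 < ρ) {Ω Ωt Ωx : ℝ → ℝ → ℝ}
    (hder_t : ∀ t ∈ Set.Ioi (0:ℝ), ∀ x ∈ Set.Icc (0:ℝ) 1,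
      HasDerivAt (fun u => Ω x u) (Ωt x t) t)
    (hder_x : ∀ t ∈ Set.Ioi (0:ℝ), ∀ x ∈ Set.Icc (0:ℝ) 1,
      HasDerivWithinAt (fun y => Ω y t) (Ωx x t) (Set.Icc 0 1) x)
    (hct : ContinuousOn (fun p : ℝ×ℝ => Ωt p.1 p.2) (Set.Icc 0 1 ×ˢ Set.Ioi 0))
    (hcx : ContinuousOn (fun p : ℝ×ℝ => Ωx p.1 p.2) (Set.Icc 0 1 ×ˢ Set.Ioi 0))
    {s : ℝ} (hs : 0 < s) {x : ℝ} (hx : x ∈ Set.Icc (0:ℝ) 1) :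
    HasDerivWithinAt (fun y => Ω y (s + y/ρ))
      (Ωx x (s + x/ρ) + (1/ρ) * Ωt x (s + x/ρ)) (Set.Icc 0 1) x := by
  set t := s + x/ρ with htdef
  have hts : s ≤ t := by
    have : 0 ≤ x / ρ := div_nonneg hx.1 hρ.le
    simp [htdef]; linarith
  have ht : 0 < t := lt_of_lt_of_le hs hts
  have hmemp : (x, t) ∈ Set.Icc (0:ℝ) 1 ×ˢ Set.Ioi (0:ℝ) := ⟨hx, ht⟩
  rw [hasDerivWithinAt_iff_isLittleO]
  rw [Asymptotics.isLittleO_iff]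
  intro ε hε
  -- continuity of the partials at (x,t)
  have hcx' := hcx (x, t) hmemp
  have hct' := hct (x, t) hmemp
  rw [Metric.continuousWithinAt_iff] at hcx' hct'
  obtain ⟨δ₁, hδ₁, Hδ₁⟩ := hcx' (ε/2) (by linarith)
  obtain ⟨δ₂, hδ₂, Hδ₂⟩ := hct' (ε*ρ/2) (by positivity)
  set δ : ℝ := (1/2) * min (min δ₁ (ρ*δ₁)) (min (ρ*δ₂) (ρ*s)) with hδdef
  have hδpos : 0 < δ := by
    apply mul_pos (by norm_num)
    apply lt_min (lt_min hδ₁ (by positivity)) (lt_min (by positivity) (by positivity))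
  have hδa : δ < δ₁ := by
    have h1 : min (min δ₁ (ρ*δ₁)) (min (ρ*δ₂) (ρ*s)) ≤ δ₁ := le_trans (min_le_left _ _) (min_le_left _ _)
    rw [hδdef]; linarith
  have hδb : δ / ρ < δ₁ := by
    have h1 : min (min δ₁ (ρ*δ₁)) (min (ρ*δ₂) (ρ*s)) ≤ ρ*δ₁ := le_trans (min_le_left _ _) (min_le_right _ _)
    rw [div_lt_iff₀ hρ]
    rw [hδdef]; nlinarith
  have hδc : δ / ρ < δ₂ := by
    have h1 : min (min δ₁ (ρ*δ₁)) (min (ρ*δ₂) (ρ*s)) ≤ ρ*δ₂ := le_trans (min_le_right _ _) (min_le_left _ _)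
    rw [div_lt_iff₀ hρ]
    rw [hδdef]; nlinarith
  have hδd : δ / ρ < s := by
    have h1 : min (min δ₁ (ρ*δ₁)) (min (ρ*δ₂) (ρ*s)) ≤ ρ*s := le_trans (min_le_right _ _) (min_le_right _ _)
    rw [div_lt_iff₀ hρ]
    rw [hδdef]; nlinarith
  have hball : ∀ᶠ x' in nhdsWithin x (Set.Icc 0 1), x' ∈ Metric.ball x δ :=
    eventually_nhdsWithin_of_eventually_nhds (Metric.ball_mem_nhds x hδpos)
  filter_upwards [hball, self_mem_nhdsWithin] with x' hx'ball hx'mem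
  set t' := s + x'/ρ with ht'def
  have hdist : |x' - x| < δ := by simpa [Real.dist_eq] using hx'ball
  have htt' : t' - t = (x' - x)/ρ := by rw [ht'def, htdef]; ring
  have hdistt : |t' - t| ≤ δ/ρ := by
    rw [htt', abs_div, abs_of_pos hρ]
    gcongr
  -- Term 1 : space increment at fixed time t'
  have ht' : 0 < t' := by
    have : 0 ≤ x' / ρ := div_nonneg hx'mem.1 hρ.le
    rw [ht'def]; linarith
  set k := Ωx x t with hkdef
  have hterm1 : |Ω x' t' - Ω x t' - (x' - x) * k| ≤ (ε/2) * |x' - x| := by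
    set S1 : Set ℝ := Set.Icc 0 1 ∩ Metric.closedBall x δ with hS1
    have hconv : Convex ℝ S1 := (convex_Icc _ _).inter (convex_closedBall _ _)
    have hf : ∀ z ∈ S1, HasDerivWithinAt (fun y => Ω y t' - y * k) (Ωx z t' - k) S1 z := by
      intro z hz
      have h1 : HasDerivWithinAt (fun y => Ω y t') (Ωx z t') (Set.Icc 0 1) z :=
        hder_x t' ht' z hz.1
      have h2 : HasDerivWithinAt (fun y => y * k) k S1 z := by
        simpa using (hasDerivWithinAt_id z S1).mul_const k
      exact (h1.mono Set.inter_subset_left).sub h2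
    have hbound : ∀ z ∈ S1, ‖Ωx z t' - k‖ ≤ ε/2 := by
      intro z hz
      have hdz : dist (z, t') (x, t) < δ₁ := by
        rw [Prod.dist_eq]
        apply max_lt
        · have := hz.2
          rw [Metric.mem_closedBall] at this
          exact lt_of_le_of_lt this hδa
        · exact lt_of_le_of_lt hdistt hδb
      have := Hδ₁ (Set.mk_mem_prod hz.1 (Set.mem_Ioi.mpr ht')) hdz
      rw [Real.dist_eq] at this
      simpa [Real.norm_eq_abs, hkdef] using this.le
    have hxS : x ∈ S1 := ⟨hx, Metric.mem_closedBall_self hδpos.le⟩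
    have hx'S : x' ∈ S1 := ⟨hx'mem, Metric.mem_closedBall.2 (by rw [Real.dist_eq]; exact hdist.le)⟩
    have hres := hconv.norm_image_sub_le_of_norm_hasDerivWithin_le hf hbound hxS hx'S
    have e : Ω x' t' - Ω x t' - (x' - x) * k = (Ω x' t' - x' * k) - (Ω x t' - x * k) := by ring
    rw [e]
    simpa [Real.norm_eq_abs, mul_comm] using hres
  -- Term 2 : time increment at fixed x
  set m := Ωt x t with hmdef
  have hterm2 : |Ω x t' - Ω x t - (t' - t) * m| ≤ (ε*ρ/2) * |t' - t| := by
    set S2 : Set ℝ := Metric.closedBall t (δ/ρ) with hS2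
    have hconv : Convex ℝ S2 := convex_closedBall _ _
    have hS2pos : ∀ ξ ∈ S2, 0 < ξ := by
      intro ξ hξ
      rw [Metric.mem_closedBall, Real.dist_eq, abs_le] at hξ
      have h1 := hξ.1
      have h3 : δ/ρ < t := lt_of_lt_of_le hδd hts
      linarith
    have hf : ∀ ξ ∈ S2, HasDerivWithinAt (fun u => Ω x u - u * m) (Ωt x ξ - m) S2 ξ := by
      intro ξ hξ
      have h1 : HasDerivAt (fun u => Ω x u) (Ωt x ξ) ξ := hder_t ξ (hS2pos ξ hξ) x hx
      have h2 : HasDerivWithinAt (fun u => u * m) m S2 ξ := by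
        simpa using (hasDerivWithinAt_id ξ S2).mul_const m
      exact h1.hasDerivWithinAt.sub h2
    have hbound : ∀ ξ ∈ S2, ‖Ωt x ξ - m‖ ≤ ε*ρ/2 := by
      intro ξ hξ
      have hdz : dist (x, ξ) (x, t) < δ₂ := by
        rw [Prod.dist_eq]
        apply max_lt
        · simpa using hδ₂
        · rw [Metric.mem_closedBall] at hξ
          exact lt_of_le_of_lt hξ hδc
      have := Hδ₂ (Set.mk_mem_prod hx (Set.mem_Ioi.mpr (hS2pos ξ hξ))) hdz
      rw [Real.dist_eq] at this
      simpa [Real.norm_eq_abs, hmdef] using this.le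
    have htS : t ∈ S2 := Metric.mem_closedBall_self (by positivity)
    have ht'S : t' ∈ S2 := Metric.mem_closedBall.2 (by rw [Real.dist_eq]; exact hdistt)
    have hres := hconv.norm_image_sub_le_of_norm_hasDerivWithin_le hf hbound htS ht'S
    have e : Ω x t' - Ω x t - (t' - t) * m = (Ω x t' - t' * m) - (Ω x t - t * m) := by ring
    rw [e]
    simpa [Real.norm_eq_abs, mul_comm] using hres
  -- combine
  have hsplit : Ω x' t' - Ω x t - (x' - x) * (k + (1/ρ) * m)
      = (Ω x' t' - Ω x t' - (x' - x) * k) + (Ω x t' - Ω x t - (t' - t) * m) := by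
    rw [htt']; ring
  have habs2 : (ε*ρ/2) * |t' - t| = (ε/2) * |x' - x| := by
    rw [htt', abs_div, abs_of_pos hρ]
    field_simp
  calc ‖Ω x' (s + x'/ρ) - Ω x (s + x/ρ) - (x' - x) • (Ωx x (s + x/ρ) + (1/ρ) * Ωt x (s + x/ρ))‖
      = |Ω x' t' - Ω x t - (x' - x) * (k + (1/ρ) * m)| := by
        simp [Real.norm_eq_abs, htdef, ht'def, hkdef, hmdef, smul_eq_mul]
    _ ≤ |Ω x' t' - Ω x t' - (x' - x) * k| + |Ω x t' - Ω x t - (t' - t) * m| := by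
        rw [hsplit]; exact abs_add_le _ _
    _ ≤ (ε/2) * |x' - x| + (ε*ρ/2) * |t' - t| := add_le_add hterm1 hterm2
    _ = ε * |x' - x| := by rw [habs2]; ring
    _ = ε * ‖x' - x‖ := by rw [Real.norm_eq_abs]
lemma my_phi_bound {ρ b αM : ℝ} (hρ : 0 < ρ) (hb : 0 ≤ b) {c cT : ℝ → ℝ}
    (hcc : Continuous c) (hcTc : Continuous cT)
    (hle : ∀ y ∈ Set.Icc (0:ℝ) 1, c y ≤ cT y)
    (hM : ∀ y ∈ Set.Icc (0:ℝ) 1, c y ≤ αM)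
    (hθ1 : (b/ρ) * (∫ x in (0:ℝ)..1, Real.exp ((1/ρ) * ∫ y in (0:ℝ)..x, (b - cT y)))
            / Real.exp ((1/ρ) * ∫ y in (0:ℝ)..1, (b - cT y)) ≤ 1) :
    (∫ x in (0:ℝ)..1, c x * Real.exp ((1/ρ) * ∫ y in (0:ℝ)..x, (b - c y)))
      ≤ ρ * (1 - Real.exp ((b - αM)/ρ) *
          (1 - (b/ρ) * (∫ x in (0:ℝ)..1, Real.exp ((1/ρ) * ∫ y in (0:ℝ)..x, (b - cT y)))
            / Real.exp ((1/ρ) * ∫ y in (0:ℝ)..1, (b - cT y)))) := by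
  have hbc : Continuous (fun y => b - c y) := continuous_const.sub hcc
  have hbcT : Continuous (fun y => b - cT y) := continuous_const.sub hcTc
  have huc : Continuous (fun x => Real.exp ((1/ρ) * ∫ y in (0:ℝ)..x, (b - c y))) :=
    (continuous_const.mul (my_prim_cont hbc)).rexp
  have huTc : Continuous (fun x => Real.exp ((1/ρ) * ∫ y in (0:ℝ)..x, (b - cT y))) :=
    (continuous_const.mul (my_prim_cont hbcT)).rexp
  set Iu : ℝ := ∫ x in (0:ℝ)..1, Real.exp ((1/ρ) * ∫ y in (0:ℝ)..x, (b - c y)) with hIu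
  set IuT : ℝ := ∫ x in (0:ℝ)..1, Real.exp ((1/ρ) * ∫ y in (0:ℝ)..x, (b - cT y)) with hIuT
  set u1 : ℝ := Real.exp ((1/ρ) * ∫ y in (0:ℝ)..1, (b - c y)) with hu1
  set uT1 : ℝ := Real.exp ((1/ρ) * ∫ y in (0:ℝ)..1, (b - cT y)) with huT1
  have hu1pos : 0 < u1 := Real.exp_pos _
  have huT1pos : 0 < uT1 := Real.exp_pos _
  have huminpos : 0 < Real.exp ((b - αM)/ρ) := Real.exp_pos _
  have hid := my_ftc_id (b := b) hρ hcc
  rw [← hIu, ← hu1] at hid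
  -- pointwise comparison
  have hkey : ∀ x ∈ Icc (0:ℝ) 1,
      Real.exp ((1/ρ) * ∫ y in (0:ℝ)..x, (b - c y))
        ≤ (u1 / uT1) * Real.exp ((1/ρ) * ∫ y in (0:ℝ)..x, (b - cT y)) := by
    intro x hx
    have hs1 : (∫ y in (0:ℝ)..x, (b - c y)) + (∫ y in x..1, (b - c y))
        = ∫ y in (0:ℝ)..1, (b - c y) :=
      intervalIntegral.integral_add_adjacent_intervals
        (hbc.intervalIntegrable _ _) (hbc.intervalIntegrable _ _)
    have hs2 : (∫ y in (0:ℝ)..x, (b - cT y)) + (∫ y in x..1, (b - cT y))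
        = ∫ y in (0:ℝ)..1, (b - cT y) :=
      intervalIntegral.integral_add_adjacent_intervals
        (hbcT.intervalIntegrable _ _) (hbcT.intervalIntegrable _ _)
    have hmono : (∫ y in x..1, (b - cT y)) ≤ ∫ y in x..1, (b - c y) := by
      apply intervalIntegral.integral_mono_on hx.2
        (hbcT.intervalIntegrable _ _) (hbc.intervalIntegrable _ _)
      intro y hy
      have := hle y ⟨hx.1.trans hy.1, hy.2⟩
      linarith
    have hexp : Real.exp ((1/ρ) * ∫ y in (0:ℝ)..x, (b - c y)) * uT1
        ≤ u1 * Real.exp ((1/ρ) * ∫ y in (0:ℝ)..x, (b - cT y)) := by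
      rw [hu1, huT1, ← Real.exp_add, ← Real.exp_add]
      apply Real.exp_le_exp.2
      rw [← mul_add, ← mul_add]
      apply mul_le_mul_of_nonneg_left _ (by positivity : (0:ℝ) ≤ 1/ρ)
      linarith [hs1, hs2, hmono]
    rw [div_mul_eq_mul_div u1 uT1, le_div_iff₀ huT1pos]
    linarith [hexp]
  have hIu_le : Iu ≤ (u1 / uT1) * IuT := by
    calc Iu ≤ ∫ x in (0:ℝ)..1,
          (u1 / uT1) * Real.exp ((1/ρ) * ∫ y in (0:ℝ)..x, (b - cT y)) := by
          rw [hIu]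
          exact intervalIntegral.integral_mono_on zero_le_one
            (huc.intervalIntegrable _ _)
            ((continuous_const.mul huTc).intervalIntegrable _ _) hkey
      _ = (u1 / uT1) * IuT := by rw [intervalIntegral.integral_const_mul, hIuT]
  have humin_le : Real.exp ((b - αM)/ρ) ≤ u1 := by
    rw [hu1]
    apply Real.exp_le_exp.2
    have h1 : (∫ y in (0:ℝ)..1, (b - αM : ℝ)) ≤ ∫ y in (0:ℝ)..1, (b - c y) := by
      apply intervalIntegral.integral_mono_on zero_le_one
        (continuous_const.intervalIntegrable _ _) (hbc.intervalIntegrable _ _)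
      intro y hy
      have := hM y hy
      linarith
    have h2 : (∫ y in (0:ℝ)..1, (b - αM : ℝ)) = b - αM := by simp
    have h3 : (1/ρ) * (b - αM) ≤ (1/ρ) * ∫ y in (0:ℝ)..1, (b - c y) :=
      mul_le_mul_of_nonneg_left (by linarith) (by positivity)
    have h4 : (b - αM)/ρ = (1/ρ) * (b - αM) := by ring
    linarith
  have hIuT_nonneg : 0 ≤ IuT := by
    rw [hIuT]
    exact intervalIntegral.integral_nonneg zero_le_one (fun x _ => (Real.exp_pos _).le)
  have hmul' : b * Iu ≤ ρ * ((b/ρ) * IuT / uT1) * u1 := by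
    have h1 : b * Iu ≤ b * ((u1 / uT1) * IuT) := mul_le_mul_of_nonneg_left hIu_le hb
    have h2 : b * ((u1 / uT1) * IuT) = ρ * ((b/ρ) * IuT / uT1) * u1 := by
      field_simp
    linarith
  rw [hid]
  calc b * Iu + ρ * (1 - u1)
      ≤ ρ * ((b/ρ) * IuT / uT1) * u1 + ρ * (1 - u1) := by linarith
    _ = ρ * (1 - u1 * (1 - (b/ρ) * IuT / uT1)) := by ring
    _ ≤ ρ * (1 - Real.exp ((b - αM)/ρ) * (1 - (b/ρ) * IuT / uT1)) := by
        apply mul_le_mul_of_nonneg_left _ hρ.le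
        have h5 : Real.exp ((b - αM)/ρ) * (1 - (b/ρ) * IuT / uT1)
            ≤ u1 * (1 - (b/ρ) * IuT / uT1) :=
          mul_le_mul_of_nonneg_right humin_le (by linarith)
        linarith
end Aux
/-- `(A, Ω)` is a C¹ solution of the Approximation 3 system for `t > 0`:
`dA/dt = −ω(Ω̄(t)) A(t) + ∫₀¹ α(x, A(t)) Ω(x,t) dx`;
`∂Ω/∂t + ρ ∂Ω/∂x = (b − α(x, A(t))) Ω(x,t)` for `x ∈ [0,1]`;
`Ω(0,t) = ω(Ω̄(t)) A(t) / ρ`, where `Ω̄(t) = ∫₀¹ Ω(x,t) dx`.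
Here `Ωt` and `Ωx` are the (continuous) partial derivatives of `Ω`. -/
def IsApprox3Solution (ρ b : ℝ) (α : ℝ → ℝ → ℝ) (ω : ℝ → ℝ) (A : ℝ → ℝ)
    (Ω Ωt Ωx : ℝ → ℝ → ℝ) : Prop :=
  (∀ t ∈ Set.Ioi (0 : ℝ),
    HasDerivAt A
      (-(ω (∫ x in (0 : ℝ)..1, Ω x t)) * A t +
        ∫ x in (0 : ℝ)..1, α x (A t) * Ω x t) t) ∧
  (∀ t ∈ Set.Ioi (0 : ℝ), ∀ x ∈ Set.Icc (0 : ℝ) 1,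
    HasDerivAt (fun s => Ω x s) (Ωt x t) t ∧
    HasDerivWithinAt (fun y => Ω y t) (Ωx x t) (Set.Icc 0 1) x ∧
    Ωt x t + ρ * Ωx x t = (b - α x (A t)) * Ω x t) ∧
  (∀ t ∈ Set.Ioi (0 : ℝ),
    Ω 0 t = ω (∫ x in (0 : ℝ)..1, Ω x t) * A t / ρ) ∧
  ContinuousOn A (Set.Ici 0) ∧
  ContinuousOn (fun p : ℝ × ℝ => Ω p.1 p.2) (Set.Icc 0 1 ×ˢ Set.Ici 0) ∧
  ContinuousOn (fun p : ℝ × ℝ => Ωt p.1 p.2) (Set.Icc 0 1 ×ˢ Set.Ioi 0) ∧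
  ContinuousOn (fun p : ℝ × ℝ => Ωx p.1 p.2) (Set.Icc 0 1 ×ˢ Set.Ioi 0)

set_option maxHeartbeats 3200000 in
/-- Let `ρ > 0`, `b > 0`, `ω : [0,∞) → (0,∞)` continuous and bounded,
and `α : [0,1] × [0,∞) → (0,∞)` continuous, bounded, and nonincreasing in its second
argument.  If there exists `Ã > 0` such that for all `A ≥ Ã`,
`∫₀¹ α(x,A) exp((1/ρ) ∫₀ˣ (b − α(y,A)) dy) dx < ρ`, then every nonnegative C¹ solution
of the Approximation 3 system on `t ≥ 0` remains bounded for all time. -/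
theorem stmt12 (ρ b : ℝ) (hρ : 0 < ρ) (hb : 0 < b)
    (ω : ℝ → ℝ) (α : ℝ → ℝ → ℝ)
    (hωc : ContinuousOn ω (Set.Ici 0))
    (hωpos : ∀ A ∈ Set.Ici (0 : ℝ), 0 < ω A)
    (hωbdd : BddAbove (ω '' Set.Ici 0))
    (hαc : ContinuousOn (fun p : ℝ × ℝ => α p.1 p.2) (Set.Icc 0 1 ×ˢ Set.Ici 0))
    (hαpos : ∀ x ∈ Set.Icc (0 : ℝ) 1, ∀ A ∈ Set.Ici (0 : ℝ), 0 < α x A)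
    (hαbdd : ∃ M : ℝ, ∀ x ∈ Set.Icc (0 : ℝ) 1, ∀ A ∈ Set.Ici (0 : ℝ), α x A ≤ M)
    (hαanti : ∀ x ∈ Set.Icc (0 : ℝ) 1, AntitoneOn (α x) (Set.Ici 0))
    (hcond : ∃ Atil : ℝ, 0 < Atil ∧ ∀ A ≥ Atil,
      (∫ x in (0 : ℝ)..1,
        α x A * Real.exp ((1 / ρ) * ∫ y in (0 : ℝ)..x, (b - α y A))) < ρ) :
    ∀ (A : ℝ → ℝ) (Ω Ωt Ωx : ℝ → ℝ → ℝ),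
      IsApprox3Solution ρ b α ω A Ω Ωt Ωx →
      (∀ t ≥ (0 : ℝ), 0 ≤ A t) →
      (∀ t ≥ (0 : ℝ), ∀ x ∈ Set.Icc (0 : ℝ) 1, 0 ≤ Ω x t) →
      ∃ M : ℝ, (∀ t ≥ (0 : ℝ), A t ≤ M) ∧
        (∀ t ≥ (0 : ℝ), ∀ x ∈ Set.Icc (0 : ℝ) 1, Ω x t ≤ M) := by
  intro A Ω Ωt Ωx hsol hA0 hΩ0
  obtain ⟨hsolA, hsolPDE, hsolBC, hAc, hΩc, hΩtc, hΩxc⟩ := hsol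
  obtain ⟨αM, hαM⟩ := hαbdd
  obtain ⟨Atil, hAtilpos, hcondA⟩ := hcond
  obtain ⟨S, hSmem⟩ := hωbdd
  have hSBound : ∀ z ∈ Set.Ici (0:ℝ), ω z ≤ S := fun z hz => hSmem ⟨z, hz, rfl⟩
  have hSpos : 0 < S := lt_of_lt_of_le (hωpos 0 Set.self_mem_Ici) (hSBound 0 Set.self_mem_Ici)
  have h01 : (0:ℝ) ∈ Icc (0:ℝ) 1 := left_mem_Icc.2 zero_le_one
  have hαMpos : 0 < αM := lt_of_lt_of_le (hαpos 0 h01 0 Set.self_mem_Ici) (hαM 0 h01 0 Set.self_mem_Ici)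
  -- continuous extensions
  obtain ⟨AE, hAEc, hAEeq⟩ := my_ext isClosed_Ici hAc
  obtain ⟨ΩE, hΩEc, hΩEeq⟩ := my_ext (isClosed_Icc.prod isClosed_Ici) hΩc
  obtain ⟨αX, hαXc, hαXeq⟩ := my_ext (isClosed_Icc.prod isClosed_Ici) hαc
  obtain ⟨ωE, hωEc, hωEeq⟩ := my_ext isClosed_Ici hωc
  -- basic functions
  set Obar : ℝ → ℝ := fun t => ∫ x in (0:ℝ)..1, Ω x t with hObardef
  set ObarE : ℝ → ℝ := fun t => ∫ x in (0:ℝ)..1, ΩE (x, t) with hObarEdef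
  have hObarEc : Continuous ObarE := by
    apply intervalIntegral.continuous_parametric_intervalIntegral_of_continuous'
      (f := fun t x => ΩE (x, t))
    exact hΩEc.comp continuous_swap
  have hObarE_eq : ∀ t, 0 ≤ t → ObarE t = Obar t := by
    intro t ht
    apply intervalIntegral.integral_congr
    intro x hx
    rw [Set.uIcc_of_le zero_le_one] at hx
    exact hΩEeq (x, t) ⟨hx, ht⟩
  have hObar_nonneg : ∀ t, 0 ≤ t → 0 ≤ Obar t := fun t ht =>
    intervalIntegral.integral_nonneg zero_le_one (fun u hu => hΩ0 t ht u hu)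
  set P : ℝ → ℝ := fun t => ω (Obar t) * A t with hPdef
  set PE : ℝ → ℝ := fun t => ωE (ObarE t) * AE t with hPEdef
  have hPEc : Continuous PE := (hωEc.comp hObarEc).mul hAEc
  have hPE_eq : ∀ t, 0 ≤ t → PE t = P t := by
    intro t ht
    simp only [hPEdef, hPdef]
    rw [hObarE_eq t ht, hωEeq _ (hObar_nonneg t ht), hAEeq t ht]
  have hPnonneg : ∀ t, 0 ≤ t → 0 ≤ P t := fun t ht =>
    mul_nonneg (hωpos _ (hObar_nonneg t ht)).le (hA0 t ht)
  have hPleS : ∀ t, 0 ≤ t → P t ≤ S * A t := fun t ht =>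
    mul_le_mul_of_nonneg_right (hSBound _ (hObar_nonneg t ht)) (hA0 t ht)
  set I : ℝ → ℝ := fun t => ∫ x in (0:ℝ)..1, α x (A t) * Ω x t with hIdef
  have hAd : ∀ t, 0 < t → HasDerivAt A (-P t + I t) t := by
    intro t ht
    have := hsolA t ht
    simpa [hPdef, hIdef, neg_mul] using this
  have hInonneg : ∀ t, 0 ≤ t → 0 ≤ I t := fun t ht =>
    intervalIntegral.integral_nonneg zero_le_one
      (fun u hu => mul_nonneg (hαpos u hu _ (hA0 t ht)).le (hΩ0 t ht u hu))
  -- Gronwall monotonicity of t ↦ A t * exp (S t)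
  have hFmono : MonotoneOn (fun t => A t * Real.exp (S * t)) (Ici 0) := by
    apply monotoneOn_of_hasDerivWithinAt_nonneg (convex_Ici 0)
      (f' := fun t => (-P t + I t + S * A t) * Real.exp (S * t))
    · exact hAc.mul (continuous_const.mul continuous_id).rexp.continuousOn
    · intro x hx
      rw [interior_Ici] at hx
      have hexp : HasDerivAt (fun t : ℝ => Real.exp (S * t)) (Real.exp (S * x) * S) x := by
        simpa using ((hasDerivAt_id x).const_mul S).exp
      have h1 := (hAd x hx).mul hexp
      have h2 : (-P x + I x) * Real.exp (S * x) + A x * (Real.exp (S * x) * S)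
          = (-P x + I x + S * A x) * Real.exp (S * x) := by ring
      rw [h2] at h1
      exact h1.hasDerivWithinAt
    · intro x hx
      rw [interior_Ici] at hx
      have h1 : P x ≤ S * A x := hPleS x hx.le
      have h2 := hInonneg x hx.le
      exact mul_nonneg (by linarith) (Real.exp_pos _).le
  have hGron : ∀ s u, 0 ≤ s → s ≤ u →
      A s * Real.exp (S * s) ≤ A u * Real.exp (S * u) := by
    intro s u hs hsu
    exact hFmono (Set.mem_Ici.2 hs) (Set.mem_Ici.2 (hs.trans hsu)) hsu
  -- characteristics representation
  set cE : ℝ → ℝ → ℝ := fun s y => (1/ρ) * (b - αX (y, AE (s + y/ρ))) with hcEdef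
  have hcEc : ∀ s, Continuous (fun y => cE s y) := by
    intro s
    apply continuous_const.mul
    apply continuous_const.sub
    exact hαXc.comp (continuous_id.prodMk (hAEc.comp
      (continuous_const.add (continuous_id.div_const ρ))))
  have hcE_eq : ∀ s, 0 ≤ s → ∀ y ∈ Icc (0:ℝ) 1,
      cE s y = (1/ρ) * (b - α y (A (s + y/ρ))) := by
    intro s hs y hy
    have harg : (0:ℝ) ≤ s + y/ρ := add_nonneg hs (div_nonneg hy.1 hρ.le)
    simp only [hcEdef]
    rw [hAEeq _ harg, hαXeq (y, A (s + y/ρ)) ⟨hy, hA0 _ harg⟩]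
  have hrep : ∀ s, 0 < s → ∀ x ∈ Icc (0:ℝ) 1,
      Ω x (s + x/ρ) = Ω 0 s * Real.exp (∫ y in (0:ℝ)..x, cE s y) := by
    intro s hs x hx
    have hgc : ContinuousOn (fun y => Ω y (s + y/ρ)) (Icc 0 1) := by
      have hmap : Set.MapsTo (fun y : ℝ => (y, s + y/ρ)) (Icc 0 1) (Icc 0 1 ×ˢ Ici 0) := by
        intro y hy
        exact ⟨hy, le_of_lt (lt_of_lt_of_le hs (by
          have : 0 ≤ y/ρ := div_nonneg hy.1 hρ.le
          linarith))⟩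
      exact hΩc.comp ((continuous_id.prodMk
        (continuous_const.add (continuous_id.div_const ρ))).continuousOn) hmap
    have hzero : Ω 0 (s + 0/ρ) = Ω 0 s := by norm_num
    have := my_ode_solve (hcEc s) hgc (fun z hz => ?_) hx
    · rw [← hzero]; exact this
    · -- derivative along characteristic
      have htz : (0:ℝ) < s + z/ρ := lt_of_lt_of_le hs (by
        have : 0 ≤ z/ρ := div_nonneg hz.1 hρ.le
        linarith)
      have hchain := my_char_deriv hρ (fun t ht x hx => (hsolPDE t ht x hx).1)
        (fun t ht x hx => (hsolPDE t ht x hx).2.1) hΩtc hΩxc hs hz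
      have hpde := (hsolPDE (s + z/ρ) htz z hz).2.2
      have heq : Ωx z (s + z/ρ) + (1/ρ) * Ωt z (s + z/ρ) = cE s z * Ω z (s + z/ρ) := by
        rw [hcE_eq s hs.le z hz]
        have hρne : ρ ≠ 0 := ne_of_gt hρ
        set t0 := s + z/ρ with ht0
        set X1 := Ωx z t0 with hX1
        set X2 := Ωt z t0 with hX2
        set X3 := Ω z t0 with hX3
        set X4 := α z (A t0) with hX4
        field_simp
        linarith [hpde]
      rw [heq] at hchain
      exact hchain
  have hrep' : ∀ t x, x ∈ Icc (0:ℝ) 1 → 1 ≤ t - 1/ρ →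
      Ω x t = (1/ρ) * P (t - x/ρ)
        * Real.exp ((1/ρ) * ∫ y in (0:ℝ)..x, (b - αX (y, AE ((t - x/ρ) + y/ρ)))) := by
    intro t x hx ht
    have hxρ : x/ρ ≤ 1/ρ := by gcongr; exact hx.2
    have hs : 0 < t - x/ρ := by linarith
    have h1 := hrep (t - x/ρ) hs x hx
    rw [show (t - x/ρ) + x/ρ = t by ring] at h1
    rw [h1, hsolBC (t - x/ρ) hs]
    have h2 : (∫ y in (0:ℝ)..x, cE (t - x/ρ) y)
        = (1/ρ) * ∫ y in (0:ℝ)..x, (b - αX (y, AE ((t - x/ρ) + y/ρ))) := by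
      simp only [hcEdef]
      exact intervalIntegral.integral_const_mul _ _
    rw [h2]
    ring
  -- the constant θ
  set cT : ℝ → ℝ := fun y => αX (y, Atil) with hcTdef
  have hcTc : Continuous cT := hαXc.comp (continuous_id.prodMk continuous_const)
  have hcT_eq : ∀ y ∈ Icc (0:ℝ) 1, cT y = α y Atil := by
    intro y hy
    simp only [hcTdef]
    exact hαXeq (y, Atil) ⟨hy, hAtilpos.le⟩
  set uT : ℝ → ℝ := fun x => Real.exp ((1/ρ) * ∫ y in (0:ℝ)..x, (b - cT y)) with huTdef
  have hbcTc : Continuous (fun y => b - cT y) := continuous_const.sub hcTc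
  have huTc : Continuous uT := (continuous_const.mul (my_prim_cont hbcTc)).rexp
  have huTpos : ∀ x, 0 < uT x := fun x => Real.exp_pos _
  set Ju : ℝ := ∫ x in (0:ℝ)..1, uT x with hJudef
  have hJu_nonneg : 0 ≤ Ju :=
    intervalIntegral.integral_nonneg zero_le_one (fun x _ => (huTpos x).le)
  set θ : ℝ := (b/ρ) * Ju / uT 1 with hθdef
  have hθnonneg : 0 ≤ θ := by
    apply div_nonneg _ (huTpos 1).le
    positivity
  have hcond' : (∫ x in (0:ℝ)..1, cT x * uT x) < ρ := by
    have h0 := hcondA Atil le_rfl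
    have hcongr : (∫ x in (0:ℝ)..1,
          α x Atil * Real.exp ((1 / ρ) * ∫ y in (0:ℝ)..x, (b - α y Atil)))
        = ∫ x in (0:ℝ)..1, cT x * uT x := by
      apply intervalIntegral.integral_congr
      intro x hx
      rw [Set.uIcc_of_le zero_le_one] at hx
      have hinner : (∫ y in (0:ℝ)..x, (b - α y Atil)) = ∫ y in (0:ℝ)..x, (b - cT y) := by
        apply intervalIntegral.integral_congr
        intro y hy
        rw [Set.uIcc_of_le hx.1] at hy
        show b - α y Atil = b - cT y
        rw [hcT_eq y ⟨hy.1, hy.2.trans hx.2⟩]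
      simp only [huTdef]
      rw [hcT_eq x hx, hinner]
    rwa [hcongr] at h0
  have hidT := my_ftc_id (b := b) hρ hcTc
  have hθlt1 : θ < 1 := by
    have h1 : b * Ju + ρ * (1 - uT 1) < ρ := by
      have := hcond'
      rw [hidT] at this
      simpa [hJudef, huTdef] using this
    have h2 : b * Ju < ρ * uT 1 := by linarith
    rw [hθdef, div_lt_one (huTpos 1), div_mul_eq_mul_div, div_lt_iff₀ hρ]
    linarith
  set K : ℝ := Real.exp (b/ρ) with hKdef
  set umin : ℝ := Real.exp ((b - αM)/ρ) with humindef
  have huminpos : 0 < umin := Real.exp_pos _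
  set θ' : ℝ := 1 - umin * (1 - θ) with hθ'def
  have hθ'le1 : θ' ≤ 1 := by
    have : 0 ≤ umin * (1 - θ) := mul_nonneg huminpos.le (by linarith)
    simp only [hθ'def]; linarith
  -- Φ bounds
  set φX : ℝ → ℝ := fun s => ∫ x in (0:ℝ)..1, αX (x, AE (s + x/ρ))
      * Real.exp ((1/ρ) * ∫ y in (0:ℝ)..x, (b - αX (y, AE (s + y/ρ)))) with hφXdef
  have hcsc : ∀ s : ℝ, Continuous (fun y => αX (y, AE (s + y/ρ))) := by
    intro s
    exact hαXc.comp (continuous_id.prodMk (hAEc.comp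
      (continuous_const.add (continuous_id.div_const ρ))))
  have hcs_eq : ∀ s, 0 ≤ s → ∀ y ∈ Icc (0:ℝ) 1,
      αX (y, AE (s + y/ρ)) = α y (A (s + y/ρ)) := by
    intro s hs y hy
    have harg : (0:ℝ) ≤ s + y/ρ := add_nonneg hs (div_nonneg hy.1 hρ.le)
    rw [hAEeq _ harg, hαXeq (y, A (s + y/ρ)) ⟨hy, hA0 _ harg⟩]
  have hcs_pos : ∀ s, 0 ≤ s → ∀ y ∈ Icc (0:ℝ) 1, 0 < αX (y, AE (s + y/ρ)) := by
    intro s hs y hy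
    rw [hcs_eq s hs y hy]
    exact hαpos y hy _ (hA0 _ (add_nonneg hs (div_nonneg hy.1 hρ.le)))
  have hcs_leM : ∀ s, 0 ≤ s → ∀ y ∈ Icc (0:ℝ) 1, αX (y, AE (s + y/ρ)) ≤ αM := by
    intro s hs y hy
    rw [hcs_eq s hs y hy]
    exact hαM y hy _ (hA0 _ (add_nonneg hs (div_nonneg hy.1 hρ.le)))
  have hφX0 : ∀ s, 0 ≤ s → 0 ≤ φX s := by
    intro s hs
    rw [hφXdef]
    exact intervalIntegral.integral_nonneg zero_le_one
      (fun x hx => mul_nonneg (hcs_pos s hs x hx).le (Real.exp_pos _).le)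
  have hexpK : ∀ s, 0 ≤ s → ∀ x ∈ Icc (0:ℝ) 1,
      Real.exp ((1/ρ) * ∫ y in (0:ℝ)..x, (b - αX (y, AE (s + y/ρ)))) ≤ K := by
    intro s hs x hx
    have hcc : Continuous (fun y => αX (y, AE (s + y/ρ))) := hcsc s
    have h1 : (∫ y in (0:ℝ)..x, (b - αX (y, AE (s + y/ρ)))) ≤ ∫ y in (0:ℝ)..x, b := by
      apply intervalIntegral.integral_mono_on hx.1
        ((continuous_const.sub hcc).intervalIntegrable _ _)
        (continuous_const.intervalIntegrable _ _)
      intro y hy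
      have := (hcs_pos s hs y ⟨hy.1, hy.2.trans hx.2⟩).le
      simp only [Pi.sub_apply]
      linarith
    have h2 : (∫ y in (0:ℝ)..x, b) = x * b := by simp [mul_comm]
    have h3 : (∫ y in (0:ℝ)..x, (b - αX (y, AE (s + y/ρ)))) ≤ b := by
      rw [h2] at h1
      nlinarith [hx.2, hb.le, hx.1]
    rw [hKdef]
    apply Real.exp_le_exp.2
    have h4 : (1/ρ) * (∫ y in (0:ℝ)..x, (b - αX (y, AE (s + y/ρ)))) ≤ (1/ρ) * b :=
      mul_le_mul_of_nonneg_left h3 (by positivity)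
    have h5 : (1/ρ) * b = b/ρ := by ring
    linarith
  have hPhiEdge : ∀ s, (0:ℝ) ≤ s → φX s ≤ αM * K := by
    intro s hs
    set c : ℝ → ℝ := fun y => αX (y, AE (s + y/ρ)) with hcdef
    have hcc : Continuous c := hcsc s
    have hintc : ∀ x : ℝ, Continuous (fun z => Real.exp ((1/ρ)
        * ∫ y in (0:ℝ)..z, (b - c y))) :=
      fun _ => (continuous_const.mul (my_prim_cont (continuous_const.sub hcc))).rexp
    have hexp_le : ∀ x ∈ Icc (0:ℝ) 1,
        Real.exp ((1/ρ) * ∫ y in (0:ℝ)..x, (b - c y)) ≤ K := by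
      intro x hx
      have h1 : (∫ y in (0:ℝ)..x, (b - c y)) ≤ ∫ y in (0:ℝ)..x, b := by
        apply intervalIntegral.integral_mono_on hx.1
          (((continuous_const.sub hcc)).intervalIntegrable _ _)
          (continuous_const.intervalIntegrable _ _)
        intro y hy
        have := (hcs_pos s hs y ⟨hy.1, hy.2.trans hx.2⟩).le
        simp only [hcdef] at this ⊢
        simp only [Pi.sub_apply]
        linarith
      have h2 : (∫ y in (0:ℝ)..x, b) = x * b := by simp [mul_comm]
      have h3 : (∫ y in (0:ℝ)..x, (b - c y)) ≤ b := by
        rw [h2] at h1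
        nlinarith [hx.2, hb.le, hx.1]
      rw [hKdef]
      apply Real.exp_le_exp.2
      have h4 : (1/ρ) * (∫ y in (0:ℝ)..x, (b - c y)) ≤ (1/ρ) * b :=
        mul_le_mul_of_nonneg_left h3 (by positivity)
      have h5 : (1/ρ) * b = b/ρ := by ring
      linarith
    rw [hφXdef]
    have hbd : ∀ x ∈ Icc (0:ℝ) 1, c x * Real.exp ((1/ρ) * ∫ y in (0:ℝ)..x, (b - c y))
        ≤ αM * K := by
      intro x hx
      apply mul_le_mul (hcs_leM s hs x hx) (hexp_le x hx) (Real.exp_pos _).le hαMpos.le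
    calc (∫ x in (0:ℝ)..1, c x * Real.exp ((1/ρ) * ∫ y in (0:ℝ)..x, (b - c y)))
        ≤ ∫ _x in (0:ℝ)..1, αM * K := by
          apply intervalIntegral.integral_mono_on zero_le_one
            ((hcc.mul (by
              apply Continuous.rexp
              apply continuous_const.mul
              exact my_prim_cont (continuous_const.sub hcc) |>.comp continuous_id |>.congr (fun _ => rfl) )).intervalIntegrable _ _)
            (continuous_const.intervalIntegrable _ _) hbd
      _ = αM * K := by simp
  have hθ1raw : (b/ρ) * (∫ x in (0:ℝ)..1, Real.exp ((1/ρ) * ∫ y in (0:ℝ)..x, (b - cT y)))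
      / Real.exp ((1/ρ) * ∫ y in (0:ℝ)..1, (b - cT y)) ≤ 1 := by
    have h := hθlt1.le
    rw [hθdef, hJudef, huTdef] at h
    simpa using h
  have hPhiMain : ∀ s, 0 ≤ s → (∀ y ∈ Icc (0:ℝ) 1, Atil ≤ A (s + y/ρ)) →
      φX s ≤ ρ * θ' := by
    intro s hs htraj
    have hle : ∀ y ∈ Icc (0:ℝ) 1, αX (y, AE (s + y/ρ)) ≤ cT y := by
      intro y hy
      rw [hcs_eq s hs y hy, hcT_eq y hy]
      exact hαanti y hy (Set.mem_Ici.2 hAtilpos.le)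
        (Set.mem_Ici.2 (hA0 _ (add_nonneg hs (div_nonneg hy.1 hρ.le)))) (htraj y hy)
    have hbound := my_phi_bound (αM := αM) hρ hb.le (hcsc s) hcTc hle (hcs_leM s hs) hθ1raw
    have hlhs : φX s = ∫ x in (0:ℝ)..1, αX (x, AE (s + x/ρ))
        * Real.exp ((1/ρ) * ∫ y in (0:ℝ)..x, (b - αX (y, AE (s + y/ρ)))) := by
      rw [hφXdef]
    have hrhs : ρ * (1 - Real.exp ((b - αM)/ρ) *
        (1 - (b/ρ) * (∫ x in (0:ℝ)..1, Real.exp ((1/ρ) * ∫ y in (0:ℝ)..x, (b - cT y)))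
          / Real.exp ((1/ρ) * ∫ y in (0:ℝ)..1, (b - cT y)))) = ρ * θ' := by
      simp only [hθ'def, hθdef, humindef, hJudef, huTdef]
    rw [hlhs, ← hrhs]
    exact hbound
  -- the kernels GF (Eulerian) and GG (Lagrangian)
  set GF : ℝ → ℝ → ℝ := fun x t => αX (x, AE t) * ((1/ρ) * PE (t - x/ρ)
      * Real.exp ((1/ρ) * ∫ y in (0:ℝ)..x, (b - αX (y, AE ((t - x/ρ) + y/ρ))))) with hGFdef
  set GG : ℝ → ℝ → ℝ := fun x s => αX (x, AE (s + x/ρ)) * ((1/ρ) * PE s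
      * Real.exp ((1/ρ) * ∫ y in (0:ℝ)..x, (b - αX (y, AE (s + y/ρ))))) with hGGdef
  have hGFc : Continuous (Function.uncurry GF) := by
    have e : Function.uncurry GF = fun p : ℝ × ℝ => αX (p.1, AE p.2) * ((1/ρ)
        * PE (p.2 - p.1/ρ)
        * Real.exp ((1/ρ) * ∫ y in (0:ℝ)..p.1, (b - αX (y, AE ((p.2 - p.1/ρ) + y/ρ))))) := by
      rw [hGFdef]; rfl
    rw [e]
    have hinner : Continuous (fun p : ℝ × ℝ =>
        ∫ y in (0:ℝ)..p.1, (b - αX (y, AE ((p.2 - p.1/ρ) + y/ρ)))) := by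
      apply intervalIntegral.continuous_parametric_intervalIntegral_of_continuous
        (f := fun (p : ℝ × ℝ) y => b - αX (y, AE ((p.2 - p.1/ρ) + y/ρ)))
        (s := fun p : ℝ × ℝ => p.1) ?_ continuous_fst
      apply continuous_const.sub
      apply hαXc.comp
      apply Continuous.prodMk continuous_snd
      apply hAEc.comp
      exact ((continuous_fst.snd).sub (continuous_fst.fst.div_const ρ)).add
        (continuous_snd.div_const ρ)
    apply Continuous.mul
    · exact hαXc.comp (continuous_fst.prodMk (hAEc.comp continuous_snd))
    · apply Continuous.mul
      · exact continuous_const.mul (hPEc.comp (continuous_snd.sub (continuous_fst.div_const ρ)))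
      · exact (continuous_const.mul hinner).rexp
  have hGGc : Continuous (Function.uncurry GG) := by
    have e : Function.uncurry GG = fun p : ℝ × ℝ => αX (p.1, AE (p.2 + p.1/ρ)) * ((1/ρ)
        * PE p.2
        * Real.exp ((1/ρ) * ∫ y in (0:ℝ)..p.1, (b - αX (y, AE (p.2 + y/ρ))))) := by
      rw [hGGdef]; rfl
    rw [e]
    have hinner : Continuous (fun p : ℝ × ℝ =>
        ∫ y in (0:ℝ)..p.1, (b - αX (y, AE (p.2 + y/ρ)))) := by
      apply intervalIntegral.continuous_parametric_intervalIntegral_of_continuous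
        (f := fun (p : ℝ × ℝ) y => b - αX (y, AE (p.2 + y/ρ)))
        (s := fun p : ℝ × ℝ => p.1) ?_ continuous_fst
      apply continuous_const.sub
      apply hαXc.comp
      apply Continuous.prodMk continuous_snd
      apply hAEc.comp
      exact (continuous_fst.snd).add (continuous_snd.div_const ρ)
    apply Continuous.mul
    · exact hαXc.comp (continuous_fst.prodMk (hAEc.comp
        (continuous_snd.add (continuous_fst.div_const ρ))))
    · apply Continuous.mul
      · exact continuous_const.mul (hPEc.comp continuous_snd)
      · exact (continuous_const.mul hinner).rexp
  have hGG_eq_GF : ∀ x s : ℝ, GF x (s + x/ρ) = GG x s := by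
    intro x s
    simp only [hGFdef, hGGdef, add_sub_cancel_right]
  have hGGφ : ∀ s : ℝ, (∫ x in (0:ℝ)..1, GG x s) = (1/ρ) * PE s * φX s := by
    intro s
    rw [hφXdef]
    rw [← intervalIntegral.integral_const_mul]
    apply intervalIntegral.integral_congr
    intro x _
    simp only [hGGdef]
    ring
  have hφXc : Continuous φX := by
    rw [hφXdef]
    apply intervalIntegral.continuous_parametric_intervalIntegral_of_continuous'
      (f := fun s x => αX (x, AE (s + x/ρ))
        * Real.exp ((1/ρ) * ∫ y in (0:ℝ)..x, (b - αX (y, AE (s + y/ρ)))))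
    have hinner : Continuous (fun p : ℝ × ℝ =>
        ∫ y in (0:ℝ)..p.2, (b - αX (y, AE (p.1 + y/ρ)))) := by
      apply intervalIntegral.continuous_parametric_intervalIntegral_of_continuous
        (f := fun (p : ℝ × ℝ) y => b - αX (y, AE (p.1 + y/ρ)))
        (s := fun p : ℝ × ℝ => p.2) ?_ continuous_snd
      apply continuous_const.sub
      apply hαXc.comp
      apply Continuous.prodMk continuous_snd
      apply hAEc.comp
      exact (continuous_fst.fst).add (continuous_snd.div_const ρ)
    apply Continuous.mul
    · exact hαXc.comp (continuous_snd.prodMk (hAEc.comp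
        (continuous_fst.add (continuous_snd.div_const ρ))))
    · exact (continuous_const.mul hinner).rexp
  set IE : ℝ → ℝ := fun t => ∫ x in (0:ℝ)..1, αX (x, AE t) * ΩE (x, t) with hIEdef
  have hIEc : Continuous IE := by
    rw [hIEdef]
    apply intervalIntegral.continuous_parametric_intervalIntegral_of_continuous'
      (f := fun t x => αX (x, AE t) * ΩE (x, t))
    apply Continuous.mul
    · exact hαXc.comp (continuous_snd.prodMk (hAEc.comp continuous_fst))
    · exact hΩEc.comp (continuous_snd.prodMk continuous_fst)
  have hIE_eq : ∀ t, 0 ≤ t → IE t = I t := by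
    intro t ht
    apply intervalIntegral.integral_congr
    intro x hx
    rw [Set.uIcc_of_le zero_le_one] at hx
    show αX (x, AE t) * ΩE (x, t) = α x (A t) * Ω x t
    rw [hAEeq t ht, hαXeq (x, A t) ⟨hx, hA0 t ht⟩, hΩEeq (x, t) ⟨hx, ht⟩]
  -- constants for the contradiction argument
  obtain ⟨C₁, hC₁⟩ := (isCompact_Icc (a := (0:ℝ)) (b := 2 + 2/ρ)).exists_bound_of_continuousOn
    hAEc.continuousOn
  have hC₁' : ∀ t ∈ Icc (0:ℝ) (2 + 2/ρ), A t ≤ C₁ := by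
    intro t ht
    have h1 := hC₁ t ht
    rw [Real.norm_eq_abs] at h1
    rw [← hAEeq t ht.1]
    exact (abs_le.1 h1).2
  have hC₁0 : (0:ℝ) ≤ C₁ := le_trans (norm_nonneg _) (hC₁ 0 (by constructor <;> positivity))
  set Abar : ℝ := max (Atil * Real.exp (S * (1/ρ))) C₁ + 1 with hAbardef
  have hAbar_posC : C₁ < Abar := by
    have := le_max_right (Atil * Real.exp (S * (1/ρ))) C₁
    simp only [hAbardef]; linarith
  have hAbar_Atil : Atil ≤ Abar := by
    have h1 : Atil * 1 ≤ Atil * Real.exp (S * (1/ρ)) :=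
      mul_le_mul_of_nonneg_left (Real.one_le_exp (by positivity)) hAtilpos.le
    have h2 := le_max_left (Atil * Real.exp (S * (1/ρ))) C₁
    simp only [hAbardef]; linarith
  have hAbarpos : 0 < Abar := lt_of_lt_of_le hAtilpos hAbar_Atil
  set A2 : ℝ := Abar * Real.exp (S * (1/ρ)) with hA2def
  have hA2pos : 0 < A2 := mul_pos hAbarpos (Real.exp_pos _)
  set C₂ : ℝ := (1/ρ) * ((1/ρ) * (S * A2) * (αM * K)) with hC₂def
  have hC₂0 : 0 ≤ C₂ := by
    have hK : 0 < K := Real.exp_pos _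
    simp only [hC₂def]; positivity
  set L : ℝ := max (Abar + C₂) (Atil * Real.exp (S * (1/ρ))) + 1 with hLdef
  have hLAbar : Abar + C₂ < L := by
    have := le_max_left (Abar + C₂) (Atil * Real.exp (S * (1/ρ)))
    simp only [hLdef]; linarith
  have hLAtil : Atil * Real.exp (S * (1/ρ)) < L := by
    have := le_max_right (Abar + C₂) (Atil * Real.exp (S * (1/ρ)))
    simp only [hLdef]; linarith
  have hLpos : 0 < L := by
    have : 0 < Atil * Real.exp (S * (1/ρ)) := by positivity
    linarith
  have hAbarL : Abar < L := by linarith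
  have hC₁L : C₁ < L := by linarith
  -- MAIN CLAIM : A stays below L
  have hAL : ∀ t, 0 ≤ t → A t < L := by
    by_contra hcontra
    push_neg at hcontra
    obtain ⟨t₀, ht₀, hLt₀⟩ := hcontra
    set ST : Set ℝ := {t | 0 ≤ t ∧ L ≤ AE t} with hSTdef
    have hSTclosed : IsClosed ST := by
      have : ST = Ici 0 ∩ AE ⁻¹' (Ici L) := by
        ext z; simp [hSTdef, Set.mem_Ici, and_comm]
      rw [this]
      exact isClosed_Ici.inter (isClosed_Ici.preimage hAEc)
    have hSTne : ST.Nonempty := ⟨t₀, ht₀, by rw [hAEeq t₀ ht₀]; exact hLt₀⟩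
    have hSTbdd : BddBelow ST := ⟨0, fun t ht => ht.1⟩
    set T := sInf ST with hTdef
    have hTmem : T ∈ ST := hSTclosed.csInf_mem hSTne hSTbdd
    have hT0 : 0 ≤ T := hTmem.1
    have hTL : L ≤ A T := by rw [← hAEeq T hT0]; exact hTmem.2
    have hbelow : ∀ t, 0 ≤ t → t < T → A t < L := by
      intro t ht htT
      by_contra hc
      push_neg at hc
      exact absurd (csInf_le hSTbdd ⟨ht, by rw [hAEeq t ht]; exact hc⟩) (not_le.2 htT)
    have hTbig : 2 + 2/ρ < T := by
      rcases lt_or_ge (2 + 2/ρ) T with hT | hT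
      · exact hT
      · exfalso
        have h1 := hC₁' T ⟨hT0, hT⟩
        linarith
    have hTpos : 0 < T := by
      have : (0:ℝ) < 2 + 2/ρ := by positivity
      linarith
    have hTeq : A T = L := by
      refine le_antisymm ?_ hTL
      have hcw : Filter.Tendsto AE (nhdsWithin T (Iio T)) (nhds (AE T)) :=
        (hAEc.continuousAt.continuousWithinAt).tendsto
      have hev : ∀ᶠ t in nhdsWithin T (Iio T), AE t ≤ L := by
        have hmem : Ioo (0:ℝ) T ∈ nhdsWithin T (Iio T) :=
          mem_nhdsWithin.2 ⟨Ioi 0, isOpen_Ioi, hTpos, fun z hz => ⟨hz.1, hz.2⟩⟩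
        filter_upwards [hmem] with t ht
        rw [hAEeq t ht.1.le]
        exact (hbelow t ht.1.le ht.2).le
      have := le_of_tendsto hcw hev
      rwa [hAEeq T hT0] at this
    -- last crossing time of level Abar
    set ST1 : Set ℝ := {t | t ∈ Icc 0 T ∧ AE t ≤ Abar} with hST1def
    have hST1closed : IsClosed ST1 := by
      have : ST1 = Icc 0 T ∩ AE ⁻¹' (Iic Abar) := by
        ext z; simp [hST1def, Set.mem_Iic]
      rw [this]
      exact isClosed_Icc.inter (isClosed_Iic.preimage hAEc)
    have hST1ne : ST1.Nonempty := by
      refine ⟨0, ⟨le_rfl, hT0⟩, ?_⟩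
      rw [hAEeq 0 Set.self_mem_Ici]
      have := hC₁' 0 ⟨le_rfl, by positivity⟩
      linarith
    have hST1bdd : BddAbove ST1 := ⟨T, fun t ht => ht.1.2⟩
    set T₁ := sSup ST1 with hT₁def
    have hT₁mem : T₁ ∈ ST1 := hST1closed.csSup_mem hST1ne hST1bdd
    have hT₁0 : 0 ≤ T₁ := hT₁mem.1.1
    have hT₁T : T₁ ≤ T := hT₁mem.1.2
    have hAT₁ : A T₁ ≤ Abar := by rw [← hAEeq T₁ hT₁0]; exact hT₁mem.2
    have hT₁big : 2 + 2/ρ ≤ T₁ := by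
      apply le_csSup hST1bdd
      refine ⟨⟨by positivity, hTbig.le⟩, ?_⟩
      rw [hAEeq _ (by positivity : (0:ℝ) ≤ 2 + 2/ρ)]
      have h9 := hC₁' (2 + 2/ρ) ⟨by positivity, le_rfl⟩
      exact le_trans h9 hAbar_posC.le
    have habove : ∀ t, T₁ < t → t ≤ T → Abar < A t := by
      intro t h1 h2
      by_contra hc
      push_neg at hc
      have ht0 : 0 ≤ t := le_trans hT₁0 h1.le
      have : t ∈ ST1 := ⟨⟨ht0, h2⟩, by rw [hAEeq t ht0]; exact hc⟩
      exact absurd (le_csSup hST1bdd this) (not_le.2 h1)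
    have hT₁T' : T₁ < T := by
      rcases eq_or_lt_of_le hT₁T with he | hlt
      · exfalso
        rw [he] at hAT₁
        rw [hTeq] at hAT₁
        linarith
      · exact hlt
    have hAT₁ge : Abar ≤ A T₁ := by
      have hcw : Filter.Tendsto AE (nhdsWithin T₁ (Ioi T₁)) (nhds (AE T₁)) :=
        (hAEc.continuousAt.continuousWithinAt).tendsto
      have hev : ∀ᶠ t in nhdsWithin T₁ (Ioi T₁), Abar ≤ AE t := by
        have hmem : Ioo T₁ T ∈ nhdsWithin T₁ (Ioi T₁) :=
          mem_nhdsWithin.2 ⟨Iio T, isOpen_Iio, hT₁T', fun z hz => ⟨hz.2, hz.1⟩⟩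
        filter_upwards [hmem] with t ht
        rw [hAEeq t (le_trans hT₁0 ht.1.le)]
        exact (habove t ht.1 ht.2.le).le
      have := ge_of_tendsto hcw hev
      rwa [hAEeq T₁ hT₁0] at this
    -- window facts
    have hW1 : ∀ u, T₁ ≤ u → u ≤ T + 1/ρ → Atil ≤ A u := by
      intro u h1 h2
      rcases le_or_gt u T with hu | hu
      · rcases eq_or_lt_of_le h1 with he | hlt
        · rw [← he]; linarith
        · linarith [habove u hlt hu]
      · -- Gronwall forward from T
        have hg := hGron T u hT0 hu.le
        rw [hTeq] at hg
        have he1 : (0:ℝ) < Real.exp (S * u) := Real.exp_pos _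
        have h3 : L * Real.exp (S * T) / Real.exp (S * u) ≤ A u := by
          rw [div_le_iff₀ he1]
          linarith
        have h4 : Real.exp (S * T) / Real.exp (S * u) = Real.exp (S * T - S * u) := by
          rw [Real.exp_sub]
        have h5 : Real.exp (-(S * (1/ρ))) ≤ Real.exp (S * T - S * u) := by
          apply Real.exp_le_exp.2
          have h6 : S * u ≤ S * (T + 1/ρ) := mul_le_mul_of_nonneg_left h2 hSpos.le
          have h6' : S * (T + 1/ρ) = S * T + S * (1/ρ) := by ring
          linarith
        have hep : (0:ℝ) < Real.exp (S * (1/ρ)) := Real.exp_pos _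
        have h7 : Atil ≤ L * Real.exp (-(S * (1/ρ))) := by
          rw [Real.exp_neg, ← div_eq_mul_inv, le_div_iff₀ hep]
          linarith
        have h8 : L * Real.exp (-(S * (1/ρ))) ≤ L * Real.exp (S * T - S * u) :=
          mul_le_mul_of_nonneg_left h5 hLpos.le
        have h9 : L * Real.exp (S * T - S * u) = L * Real.exp (S * T) / Real.exp (S * u) := by
          rw [← h4]; ring
        linarith
    have hW2 : ∀ s, T₁ - 1/ρ ≤ s → s ≤ T₁ → A s ≤ A2 := by
      intro s h1 h2
      have hρ1 : (0:ℝ) < 1/ρ := by positivity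
      have h2ρ : 2/ρ = 2*(1/ρ) := by ring
      have hs0 : 0 ≤ s := by linarith [hT₁big]
      have hg := hGron s T₁ hs0 h2
      have he1 : (0:ℝ) < Real.exp (S * s) := Real.exp_pos _
      have h3 : A s ≤ A T₁ * Real.exp (S * T₁) / Real.exp (S * s) := by
        rw [le_div_iff₀ he1]
        linarith
      have h4 : A T₁ * Real.exp (S * T₁) / Real.exp (S * s)
          = A T₁ * Real.exp (S * T₁ - S * s) := by
        rw [Real.exp_sub]; ring
      have h5 : Real.exp (S * T₁ - S * s) ≤ Real.exp (S * (1/ρ)) := by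
        apply Real.exp_le_exp.2
        have h6 : S * T₁ - S * s = S * (T₁ - s) := by ring
        rw [h6]
        exact mul_le_mul_of_nonneg_left (by linarith) hSpos.le
      have h7 : A T₁ * Real.exp (S * T₁ - S * s) ≤ Abar * Real.exp (S * (1/ρ)) := by
        apply mul_le_mul hAT₁ h5 (Real.exp_pos _).le hAbarpos.le
      rw [hA2def]
      linarith [h3, h4.le, h7]
    -- FTC on [T₁, T]
    have hT₁pos : 0 < T₁ := by
      have h0 : (0:ℝ) < 2 + 2/ρ := by positivity
      linarith
    have h1ρpos : (0:ℝ) < 1/ρ := by positivity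
    have h2ρ' : 2/ρ = 2*(1/ρ) := by ring
    have huIccT : Set.uIcc T₁ T = Icc T₁ T := Set.uIcc_of_le hT₁T
    have hPint : IntervalIntegrable P volume T₁ T := by
      rw [intervalIntegrable_iff_integrableOn_Icc_of_le hT₁T]
      apply MeasureTheory.IntegrableOn.congr_fun (hPEc.integrableOn_Icc) ?_ measurableSet_Icc
      intro t ht
      exact hPE_eq t (le_trans hT₁0 ht.1)
    have hIint : IntervalIntegrable I volume T₁ T := by
      rw [intervalIntegrable_iff_integrableOn_Icc_of_le hT₁T]
      apply MeasureTheory.IntegrableOn.congr_fun (hIEc.integrableOn_Icc) ?_ measurableSet_Icc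
      intro t ht
      exact hIE_eq t (le_trans hT₁0 ht.1)
    have hFTC : (∫ t in T₁..T, (-P t + I t)) = A T - A T₁ := by
      apply intervalIntegral.integral_eq_sub_of_hasDerivAt
      · intro t ht
        rw [huIccT] at ht
        exact hAd t (lt_of_lt_of_le hT₁pos ht.1)
      · exact hPint.neg.add hIint
    have hsub : (∫ t in T₁..T, (I t - P t)) = A T - A T₁ := by
      rw [← hFTC]
      apply intervalIntegral.integral_congr
      intro t _
      show I t - P t = -P t + I t
      ring
    have hsub2 : (∫ t in T₁..T, (I t - P t))
        = (∫ t in T₁..T, I t) - (∫ t in T₁..T, P t) :=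
      intervalIntegral.integral_sub hIint hPint
    -- representation of I on [T₁, T]
    have hstep1 : (∫ t in T₁..T, I t) = ∫ t in T₁..T, (∫ x in (0:ℝ)..1, GF x t) := by
      apply intervalIntegral.integral_congr
      intro t ht
      rw [huIccT] at ht
      have ht1 : 1 ≤ t - 1/ρ := by linarith [ht.1, hT₁big]
      have ht0 : (0:ℝ) ≤ t := le_trans hT₁0 ht.1
      show I t = ∫ x in (0:ℝ)..1, GF x t
      rw [hIdef]
      apply intervalIntegral.integral_congr
      intro x hx
      rw [Set.uIcc_of_le zero_le_one] at hx
      have hxρ : x/ρ ≤ 1/ρ := by gcongr; exact hx.2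
      have harg : (0:ℝ) ≤ t - x/ρ := by linarith
      show α x (A t) * Ω x t = GF x t
      rw [hrep' t x hx ht1]
      simp only [hGFdef]
      rw [hAEeq t ht0, hαXeq (x, A t) ⟨hx, hA0 t ht0⟩, hPE_eq _ harg]
    have hstep2 : (∫ t in T₁..T, (∫ x in (0:ℝ)..1, GF x t))
        = ∫ x in (0:ℝ)..1, (∫ t in T₁..T, GF x t) :=
      (my_swap hGFc zero_le_one hT₁T).symm
    have hstep3 : ∀ x ∈ Icc (0:ℝ) 1,
        (∫ t in T₁..T, GF x t) ≤ ∫ s in (T₁ - 1/ρ)..T, GG x s := by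
      intro x hx
      have hxρ : x/ρ ≤ 1/ρ := by gcongr; exact hx.2
      have hxρ0 : 0 ≤ x/ρ := div_nonneg hx.1 hρ.le
      have hGGcx : Continuous (fun s => GG x s) :=
        hGGc.comp (continuous_const.prodMk continuous_id)
      have htrans : (∫ t in T₁..T, GF x t) = ∫ s in (T₁ - x/ρ)..(T - x/ρ), GG x s := by
        have h1 := intervalIntegral.integral_comp_add_right
          (a := T₁ - x/ρ) (b := T - x/ρ) (fun t => GF x t) (x/ρ)
        rw [sub_add_cancel, sub_add_cancel] at h1
        rw [← h1]
        apply intervalIntegral.integral_congr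
        intro s _
        exact hGG_eq_GF x s
      rw [htrans]
      have hGGnn : ∀ s, T₁ - 1/ρ ≤ s → 0 ≤ GG x s := by
        intro s hs
        have hs0 : 0 ≤ s := by linarith [hT₁big]
        simp only [hGGdef]
        have h1 := (hcs_pos s hs0 x hx).le
        have h3 : 0 ≤ PE s := by rw [hPE_eq s hs0]; exact hPnonneg s hs0
        exact mul_nonneg h1 (mul_nonneg (mul_nonneg (by positivity) h3) (Real.exp_pos _).le)
      have e1 : (∫ s in (T₁ - x/ρ)..(T - x/ρ), GG x s) + (∫ s in (T - x/ρ)..T, GG x s)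
          = ∫ s in (T₁ - x/ρ)..T, GG x s :=
        intervalIntegral.integral_add_adjacent_intervals
          (hGGcx.intervalIntegrable _ _) (hGGcx.intervalIntegrable _ _)
      have e2 : (∫ s in (T₁ - 1/ρ)..(T₁ - x/ρ), GG x s) + (∫ s in (T₁ - x/ρ)..T, GG x s)
          = ∫ s in (T₁ - 1/ρ)..T, GG x s :=
        intervalIntegral.integral_add_adjacent_intervals
          (hGGcx.intervalIntegrable _ _) (hGGcx.intervalIntegrable _ _)
      have hnn1 : 0 ≤ ∫ s in (T₁ - 1/ρ)..(T₁ - x/ρ), GG x s :=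
        intervalIntegral.integral_nonneg (by linarith) (fun s hs => hGGnn s hs.1)
      have hnn2 : 0 ≤ ∫ s in (T - x/ρ)..T, GG x s :=
        intervalIntegral.integral_nonneg (by linarith)
          (fun s hs => hGGnn s (by linarith [hs.1]))
      linarith [e1, e2, hnn1, hnn2]
    have hstep4 : (∫ x in (0:ℝ)..1, (∫ t in T₁..T, GF x t))
        ≤ ∫ x in (0:ℝ)..1, (∫ s in (T₁ - 1/ρ)..T, GG x s) := by
      apply intervalIntegral.integral_mono_on zero_le_one ?_ ?_ hstep3
      · exact (intervalIntegral.continuous_parametric_intervalIntegral_of_continuous'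
          hGFc T₁ T).intervalIntegrable _ _
      · exact (intervalIntegral.continuous_parametric_intervalIntegral_of_continuous'
          hGGc (T₁ - 1/ρ) T).intervalIntegrable _ _
    have hstep5 : (∫ x in (0:ℝ)..1, (∫ s in (T₁ - 1/ρ)..T, GG x s))
        = ∫ s in (T₁ - 1/ρ)..T, ((1/ρ) * PE s * φX s) := by
      rw [my_swap hGGc zero_le_one (by linarith : T₁ - 1/ρ ≤ T)]
      apply intervalIntegral.integral_congr
      intro s _
      exact hGGφ s
    have hPφc : Continuous (fun s => (1/ρ) * PE s * φX s) :=
      (continuous_const.mul hPEc).mul hφXc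
    have hsplit2 : (∫ s in (T₁ - 1/ρ)..T, ((1/ρ) * PE s * φX s))
        = (∫ s in (T₁ - 1/ρ)..T₁, ((1/ρ) * PE s * φX s))
          + (∫ s in T₁..T, ((1/ρ) * PE s * φX s)) :=
      (intervalIntegral.integral_add_adjacent_intervals
        (hPφc.intervalIntegrable _ _) (hPφc.intervalIntegrable _ _)).symm
    have hedge : (∫ s in (T₁ - 1/ρ)..T₁, ((1/ρ) * PE s * φX s)) ≤ C₂ := by
      have hle : ∀ s ∈ Icc (T₁ - 1/ρ) T₁,
          (1/ρ) * PE s * φX s ≤ (1/ρ) * (S * A2) * (αM * K) := by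
        intro s hs
        have hs0 : 0 ≤ s := by linarith [hT₁big, hs.1]
        have hP1 : PE s = P s := hPE_eq s hs0
        have hP2 : P s ≤ S * A s := hPleS s hs0
        have hP3 : A s ≤ A2 := hW2 s hs.1 hs.2
        have hφ1 : φX s ≤ αM * K := hPhiEdge s hs0
        have hφ0 : 0 ≤ φX s := hφX0 s hs0
        have hP0 : 0 ≤ P s := hPnonneg s hs0
        have hKpos : (0:ℝ) < K := Real.exp_pos _
        calc (1/ρ) * PE s * φX s = (1/ρ) * (P s * φX s) := by rw [hP1]; ring
          _ ≤ (1/ρ) * ((S * A2) * (αM * K)) := by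
              apply mul_le_mul_of_nonneg_left ?_ (by positivity)
              apply mul_le_mul ?_ hφ1 hφ0 (by positivity)
              calc P s ≤ S * A s := hP2
                _ ≤ S * A2 := mul_le_mul_of_nonneg_left hP3 hSpos.le
          _ = (1/ρ) * (S * A2) * (αM * K) := by ring
      have hTT : T₁ - 1/ρ ≤ T₁ := by linarith
      calc (∫ s in (T₁ - 1/ρ)..T₁, ((1/ρ) * PE s * φX s))
          ≤ ∫ _s in (T₁ - 1/ρ)..T₁, ((1/ρ) * (S * A2) * (αM * K)) :=
            intervalIntegral.integral_mono_on hTT (hPφc.intervalIntegrable _ _)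
              (continuous_const.intervalIntegrable _ _) hle
        _ = C₂ := by
            rw [intervalIntegral.integral_const, smul_eq_mul,
              (by ring : T₁ - (T₁ - 1/ρ) = 1/ρ), hC₂def]
    have hmain : (∫ s in T₁..T, ((1/ρ) * PE s * φX s)) ≤ θ' * ∫ s in T₁..T, P s := by
      have hle : ∀ s ∈ Icc T₁ T, (1/ρ) * PE s * φX s ≤ θ' * P s := by
        intro s hs
        have hs0 : 0 ≤ s := le_trans hT₁0 hs.1
        have htraj : ∀ y ∈ Icc (0:ℝ) 1, Atil ≤ A (s + y/ρ) := by
          intro y hy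
          apply hW1 (s + y/ρ) (by linarith [div_nonneg hy.1 hρ.le, hs.1])
          have : y/ρ ≤ 1/ρ := by gcongr; exact hy.2
          linarith [hs.2]
        have hφ := hPhiMain s hs0 htraj
        have hP0 : 0 ≤ P s := hPnonneg s hs0
        rw [hPE_eq s hs0]
        calc (1/ρ) * P s * φX s ≤ (1/ρ) * P s * (ρ * θ') := by
              apply mul_le_mul_of_nonneg_left hφ (by positivity)
          _ = θ' * P s := by field_simp
      calc (∫ s in T₁..T, ((1/ρ) * PE s * φX s)) ≤ ∫ s in T₁..T, (θ' * P s) :=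
            intervalIntegral.integral_mono_on hT₁T (hPφc.intervalIntegrable _ _)
              (hPint.const_mul θ') hle
        _ = θ' * ∫ s in T₁..T, P s := intervalIntegral.integral_const_mul _ _
    have hIbound : (∫ t in T₁..T, I t) ≤ θ' * (∫ s in T₁..T, P s) + C₂ := by
      have c1 : (∫ t in T₁..T, I t) = ∫ x in (0:ℝ)..1, (∫ t in T₁..T, GF x t) := by
        rw [hstep1, hstep2]
      rw [c1]
      calc (∫ x in (0:ℝ)..1, (∫ t in T₁..T, GF x t))
          ≤ ∫ x in (0:ℝ)..1, (∫ s in (T₁ - 1/ρ)..T, GG x s) := hstep4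
        _ = ∫ s in (T₁ - 1/ρ)..T, ((1/ρ) * PE s * φX s) := hstep5
        _ = (∫ s in (T₁ - 1/ρ)..T₁, ((1/ρ) * PE s * φX s))
            + (∫ s in T₁..T, ((1/ρ) * PE s * φX s)) := hsplit2
        _ ≤ θ' * (∫ s in T₁..T, P s) + C₂ := by linarith [hedge, hmain]
    have hPint0 : 0 ≤ ∫ s in T₁..T, P s :=
      intervalIntegral.integral_nonneg hT₁T (fun u hu => hPnonneg u (le_trans hT₁0 hu.1))
    have h1θ : 0 ≤ 1 - θ' := by
      have h0 : 0 ≤ umin * (1 - θ) := mul_nonneg huminpos.le (by linarith)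
      simp only [hθ'def]
      linarith
    have hfinal : A T ≤ A T₁ + C₂ := by
      have h1 : A T - A T₁ = (∫ t in T₁..T, I t) - (∫ t in T₁..T, P t) := by
        rw [← hsub, hsub2]
      have h3 : 0 ≤ (1 - θ') * (∫ s in T₁..T, P s) := mul_nonneg h1θ hPint0
      have h3' : (1 - θ') * (∫ s in T₁..T, P s)
          = (∫ s in T₁..T, P s) - θ' * (∫ s in T₁..T, P s) := by ring
      linarith [h1, hIbound, h3, h3']
    rw [hTeq] at hfinal
    linarith [hAT₁, hLAbar, hfinal]
  -- final bounds
  obtain ⟨C₀, hC₀⟩ := ((isCompact_Icc (a := (0:ℝ)) (b := 1)).prod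
    (isCompact_Icc (a := (0:ℝ)) (b := 1 + 1/ρ))).exists_bound_of_continuousOn
    hΩEc.continuousOn
  have hKpos : (0:ℝ) < K := Real.exp_pos _
  refine ⟨max L (max C₀ ((1/ρ) * (S * L) * K)), ?_, ?_⟩
  · intro t ht
    exact le_trans (hAL t ht).le (le_max_left _ _)
  · intro t ht x hx
    rcases le_or_gt t (1 + 1/ρ) with hcase | hcase
    · have h1 := hC₀ (x, t) ⟨hx, ht, hcase⟩
      rw [Real.norm_eq_abs] at h1
      have h2 : Ω x t ≤ C₀ := by
        rw [← hΩEeq (x, t) ⟨hx, ht⟩]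
        exact (abs_le.1 h1).2
      exact le_trans h2 (le_trans (le_max_left _ _) (le_max_right _ _))
    · have ht1 : 1 ≤ t - 1/ρ := by linarith
      rw [hrep' t x hx ht1]
      have hxρ : x/ρ ≤ 1/ρ := by gcongr; exact hx.2
      have harg0 : (0:ℝ) ≤ t - x/ρ := by
        have h0 : (0:ℝ) < 1/ρ := by positivity
        linarith
      have hP1 : P (t - x/ρ) ≤ S * L :=
        le_trans (hPleS _ harg0)
          (mul_le_mul_of_nonneg_left (hAL _ harg0).le hSpos.le)
      have hP0 : 0 ≤ P (t - x/ρ) := hPnonneg _ harg0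
      have hexp1 : Real.exp ((1/ρ) * ∫ y in (0:ℝ)..x, (b - αX (y, AE ((t - x/ρ) + y/ρ)))) ≤ K :=
        hexpK (t - x/ρ) harg0 x hx
      have hexp0 : (0:ℝ) ≤ Real.exp ((1/ρ)
          * ∫ y in (0:ℝ)..x, (b - αX (y, AE ((t - x/ρ) + y/ρ)))) := (Real.exp_pos _).le
      have hfin : (1/ρ) * P (t - x/ρ)
          * Real.exp ((1/ρ) * ∫ y in (0:ℝ)..x, (b - αX (y, AE ((t - x/ρ) + y/ρ))))
          ≤ (1/ρ) * (S * L) * K := by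
        have h2 : P (t - x/ρ)
            * Real.exp ((1/ρ) * ∫ y in (0:ℝ)..x, (b - αX (y, AE ((t - x/ρ) + y/ρ))))
            ≤ (S * L) * K := by
          apply mul_le_mul hP1 hexp1 hexp0 ?_
          have := mul_pos hSpos hLpos
          positivity
        calc (1/ρ) * P (t - x/ρ)
            * Real.exp ((1/ρ) * ∫ y in (0:ℝ)..x, (b - αX (y, AE ((t - x/ρ) + y/ρ))))
            = (1/ρ) * (P (t - x/ρ)
              * Real.exp ((1/ρ) * ∫ y in (0:ℝ)..x, (b - αX (y, AE ((t - x/ρ) + y/ρ))))) := by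
              ring
          _ ≤ (1/ρ) * ((S * L) * K) := mul_le_mul_of_nonneg_left h2 (by positivity)
          _ = (1/ρ) * (S * L) * K := by ring
      exact le_trans hfin (le_trans (le_max_right _ _) (le_max_right _ _))
end

section
/- Let ρ_d > 0, b > 0, let b* > 0 be the conjugate of b (b* = b if b = ρ_d, else b* ≠ b with b*·e^{−b*/ρ_d} = b·e^{−b/ρ_d}), and let Ã > 0, Ω̃₀ > 0, α' ≤ 0, ω' ≤ 0 be real constants (the steady-state values and derivatives of the transition rates). Let λ be a real number with λ ≠ 0, λ ≠ b − b*, and λ ≠ α'·Ω̃₀·ρ_d/b* − Ω̃₀·ρ_d/Ã. Then λ is an eigenvalue of the linearized system at the nonzero steady state — i.e., there exist a C¹ function δΩ : [0,1] → ℝ with ∫₀¹ δΩ(x) dx = 1 and a real δA such that λ·δΩ(x) + ρ_d·δΩ'(x) = (b − b*)·δΩ(x) − α'·δA·Ω̃₀·e^{(b−b*)x/ρ_d}, λ·δA = b*·∫₀¹ δΩ dx + α'·δA·Ω̃₀·ρ_d/b* − (Ω̃₀·ρ_d/Ã)·δA − ω'·Ã·∫₀¹ δΩ dx, and δΩ(0)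 = (Ω̃₀/Ã)·δA + (ω'·Ã/ρ_d)·∫₀¹ δΩ dx — if and only if f(λ) = 1, where f(λ) = [ρ_d/(b − b* − λ)]·[(b/b*)·e^{−λ/ρ_d} − 1]·[ω'Ã/ρ_d + (Ω̃₀/Ã)·(b* − ω'Ã)/(λ − α'Ω̃₀ρ_d/b* + Ω̃₀ρ_d/Ã)] − [α'Ω̃₀ρ_d/(b*·λ)]·[(b·(1 − e^{−λ/ρ_d}) − λ)/(b − b* − λ)]·[(b* − ω'Ã)/(λ − α'Ω̃₀ρ_d/b* + Ω̃₀ρ_d/Ã)]. -/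
open Real Set

private lemma int_exp_ne (r : ℝ) (hr : r ≠ 0) :
    ∫ x in (0:ℝ)..1, Real.exp (r * x) = (Real.exp r - 1) / r := by
  have h : ∀ x ∈ Set.uIcc (0:ℝ) 1,
      HasDerivAt (fun y => Real.exp (r * y) / r) (Real.exp (r * x)) x := by
    intro x _
    have h1 : HasDerivAt (fun y : ℝ => r * y) r x := by
      simpa using (hasDerivAt_id x).const_mul r
    have h3 := h1.exp.div_const r
    simpa [mul_div_assoc, mul_div_cancel_right₀ _ hr] using h3
  have hc : IntervalIntegrable (fun x => Real.exp (r * x)) MeasureTheory.volume 0 1 :=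
    (Real.continuous_exp.comp (continuous_const.mul continuous_id)).intervalIntegrable 0 1
  have := intervalIntegral.integral_eq_sub_of_hasDerivAt h hc
  rw [this]; simp [Real.exp_zero]; ring

set_option maxHeartbeats 1000000 in
/-- characteristic equation for the linearization of the Approximation 4
system around its nonzero steady state.  With `ρ > 0`, `b > 0`, conjugate value `b*`,
steady-state values `Ã > 0`, `Ω̃₀ > 0`, derivatives `α' ≤ 0`, `ω' ≤ 0` of the
transition rates, and `λ ∈ ℝ` avoiding the exceptional values `0`, `b − b*`,
`α'Ω̃₀ρ/b* − Ω̃₀ρ/Ã`, the value `λ` is an eigenvalue of the linearized system (i.e.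
there is a normalized C¹ eigenvector `(δΩ, δA)`) iff `f(λ) = 1`. -/
theorem stmt16 (ρ b : ℝ) (hρ : 0 < ρ) (hb : 0 < b)
    (bstar : ℝ)
    (hbstar₁ : b = ρ → bstar = b)
    (hbstar₂ : b ≠ ρ → 0 < bstar ∧ bstar ≠ b ∧
      bstar * Real.exp (-bstar / ρ) = b * Real.exp (-b / ρ))
    (At Om0 : ℝ) (hAt : 0 < At) (hOm0 : 0 < Om0)
    (ap wp : ℝ) (hap : ap ≤ 0) (hwp : wp ≤ 0)
    (lam : ℝ) (hlam0 : lam ≠ 0) (hlam1 : lam ≠ b - bstar)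
    (hlam2 : lam ≠ ap * Om0 * ρ / bstar - Om0 * ρ / At) :
    (∃ (δΩ δΩd : ℝ → ℝ) (δA : ℝ),
        (∀ x ∈ Set.Icc (0 : ℝ) 1, HasDerivWithinAt δΩ (δΩd x) (Set.Icc 0 1) x) ∧
        ContinuousOn δΩd (Set.Icc 0 1) ∧
        (∫ x in (0 : ℝ)..1, δΩ x) = 1 ∧
        (∀ x ∈ Set.Icc (0 : ℝ) 1,
          lam * δΩ x + ρ * δΩd x =
            (b - bstar) * δΩ x -
              ap * δA * Om0 * Real.exp ((b - bstar) * x / ρ)) ∧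
        (lam * δA = bstar * (∫ x in (0 : ℝ)..1, δΩ x) +
            ap * δA * Om0 * ρ / bstar - Om0 * ρ / At * δA -
            wp * At * (∫ x in (0 : ℝ)..1, δΩ x)) ∧
        (δΩ 0 = Om0 / At * δA +
            wp * At / ρ * (∫ x in (0 : ℝ)..1, δΩ x))) ↔
      ((ρ / (b - bstar - lam)) * ((b / bstar) * Real.exp (-lam / ρ) - 1) *
          (wp * At / ρ +
            (Om0 / At) * (bstar - wp * At) /
              (lam - ap * Om0 * ρ / bstar + Om0 * ρ / At)) -
        (ap * Om0 * ρ / (bstar * lam)) *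
          ((b * (1 - Real.exp (-lam / ρ)) - lam) / (b - bstar - lam)) *
          ((bstar - wp * At) /
            (lam - ap * Om0 * ρ / bstar + Om0 * ρ / At)) = 1) := by
  have hρ' : ρ ≠ 0 := ne_of_gt hρ
  have hAt' : At ≠ 0 := ne_of_gt hAt
  have hbs : 0 < bstar := by
    by_cases h : b = ρ
    · rw [hbstar₁ h]; exact hb
    · exact (hbstar₂ h).1
  have hbs' : bstar ≠ 0 := ne_of_gt hbs
  have hbbl : b - bstar - lam ≠ 0 := by intro h; exact hlam1 (by linarith)
  have hexp : Real.exp ((b - bstar) / ρ) = b / bstar := by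
    by_cases h : b = ρ
    · rw [hbstar₁ h]; simp [ne_of_gt hb]
    · obtain ⟨h1, h2, h3⟩ := hbstar₂ h
      have e0 : Real.exp (-bstar / ρ) = (b / bstar) * Real.exp (-b / ρ) := by
        field_simp; rw [neg_div, neg_div] at h3; linarith [h3]
      have e1 : Real.exp ((b - bstar) / ρ) * Real.exp (-b / ρ)
          = (b / bstar) * Real.exp (-b / ρ) := by
        rw [← Real.exp_add, show (b - bstar) / ρ + -b / ρ = -bstar / ρ by ring, e0]
      exact mul_right_cancel₀ (Real.exp_ne_zero _) e1
  set μ : ℝ := (b - bstar - lam) / ρ with hμdef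
  set ν : ℝ := (b - bstar) / ρ with hνdef
  have hμ0 : μ ≠ 0 := by
    rw [hμdef]; exact div_ne_zero hbbl hρ'
  have hρμ : ρ * μ = b - bstar - lam := by rw [hμdef]; field_simp
  have hρν : ρ * ν = b - bstar := by rw [hνdef]; field_simp
  have hνexp : Real.exp ν = b / bstar := hexp
  set D : ℝ := lam - ap * Om0 * ρ / bstar + Om0 * ρ / At with hDdef
  have hD : D ≠ 0 := by
    rw [hDdef]; intro h; apply hlam2; linarith
  set dA : ℝ := (bstar - wp * At) / D with hdAdef
  set K : ℝ := -(ap * dA * Om0) / lam with hKdef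
  set C : ℝ := Om0 / At * dA + wp * At / ρ - K with hCdef
  have hKl : ap * dA * Om0 = -K * lam := by rw [hKdef]; field_simp
  have hdAD : dA * D = bstar - wp * At := by rw [hdAdef]; field_simp
  have hEμν : Real.exp μ = (b / bstar) * Real.exp (-lam / ρ) := by
    rw [hμdef, show (b - bstar - lam) / ρ = (b - bstar) / ρ + -lam / ρ by ring,
      Real.exp_add, hexp]
  have hEν : (∫ x in (0:ℝ)..1, Real.exp (ν * x)) = ρ / bstar := by
    by_cases h : b = ρ
    · have hb2 : bstar = b := hbstar₁ h
      have hν0 : ν = 0 := by rw [hνdef, hb2]; ring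
      simp [hν0, hb2, ← h, div_self (ne_of_gt hb)]
    · have hνne : ν ≠ 0 := by
        rw [hνdef]
        exact div_ne_zero (sub_ne_zero.mpr (Ne.symm (hbstar₂ h).2.1)) hρ'
      have hbb : b - bstar ≠ 0 := sub_ne_zero.mpr (Ne.symm (hbstar₂ h).2.1)
      rw [int_exp_ne ν hνne, hνexp, hνdef]
      field_simp
  clear_value μ ν D dA K C
  have hfval : (ρ / (b - bstar - lam)) * ((b / bstar) * Real.exp (-lam / ρ) - 1) *
          (wp * At / ρ + (Om0 / At) * (bstar - wp * At) / D) -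
        (ap * Om0 * ρ / (bstar * lam)) *
          ((b * (1 - Real.exp (-lam / ρ)) - lam) / (b - bstar - lam)) * dA
      = (Real.exp μ - 1) / μ * C + ρ / bstar * K := by
    rw [hCdef, hKdef, hEμν, hμdef, hdAdef]
    field_simp
    ring
  have hcμ : Continuous fun x : ℝ => C * Real.exp (μ * x) :=
    continuous_const.mul (Real.continuous_exp.comp (continuous_const.mul continuous_id))
  have hcν : Continuous fun x : ℝ => K * Real.exp (ν * x) :=
    continuous_const.mul (Real.continuous_exp.comp (continuous_const.mul continuous_id))
  have hI : (∫ x in (0:ℝ)..1, (C * Real.exp (μ * x) + K * Real.exp (ν * x)))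
      = (Real.exp μ - 1) / μ * C + ρ / bstar * K := by
    rw [intervalIntegral.integral_add (hcμ.intervalIntegrable 0 1) (hcν.intervalIntegrable 0 1),
      intervalIntegral.integral_const_mul, intervalIntegral.integral_const_mul,
      int_exp_ne μ hμ0, hEν]
    ring
  constructor
  · rintro ⟨δΩ, δΩd, δA, hderiv, hcontd, hint, hode, hA, hbd⟩
    rw [hint] at hA hbd
    have hδA : δA = dA := by
      rw [hdAdef, eq_div_iff hD, hDdef]
      linear_combination hA
    subst hδA
    have hC0 : δΩ 0 = C + K := by
      rw [hCdef]; linear_combination hbd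
    have hg : ∀ x ∈ Set.Icc (0:ℝ) 1, HasDerivWithinAt
        (fun x => (δΩ x - K * Real.exp (ν * x)) * Real.exp (-μ * x)) 0 (Set.Icc 0 1) x := by
      intro x hx
      have h1 := hderiv x hx
      have hνx : HasDerivAt (fun y : ℝ => K * Real.exp (ν * y)) (K * (Real.exp (ν * x) * ν)) x := by
        have h0 : HasDerivAt (fun y : ℝ => ν * y) ν x := by
          simpa using (hasDerivAt_id x).const_mul ν
        exact h0.exp.const_mul K
      have hμx : HasDerivAt (fun y : ℝ => Real.exp (-μ * y)) (Real.exp (-μ * x) * -μ) x := by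
        have h0 : HasDerivAt (fun y : ℝ => -μ * y) (-μ) x := by
          simpa using (hasDerivAt_id x).const_mul (-μ)
        exact h0.exp
      have h4 := (h1.sub hνx.hasDerivWithinAt).mul hμx.hasDerivWithinAt
      convert h4 using 1
      · rfl
      · rfl
      · rfl
      have hode' := hode x hx
      rw [show (b - bstar) * x / ρ = ν * x by rw [hνdef]; ring] at hode'
      have h5 : δΩd x = μ * δΩ x + K * lam / ρ * Real.exp (ν * x) := by
        rw [hμdef]
        field_simp
        linear_combination hode' - Real.exp (ν * x) * hKl
      rw [Pi.sub_apply, h5]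
      have h6 : μ = ν - lam / ρ := by rw [hμdef, hνdef]; ring
      rw [h6]
      field_simp
      ring
    have hgc : ∀ x ∈ Set.Icc (0:ℝ) 1,
        (fun x => (δΩ x - K * Real.exp (ν * x)) * Real.exp (-μ * x)) x
          = (fun x => (δΩ x - K * Real.exp (ν * x)) * Real.exp (-μ * x)) 0 := by
      apply constant_of_derivWithin_zero (a := (0:ℝ)) (b := 1)
      · intro x hx
        exact ⟨_, (hg x hx).hasFDerivWithinAt⟩
      · intro x hx
        have hx' : x ∈ Set.Icc (0:ℝ) 1 := Set.Ico_subset_Icc_self hx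
        exact (hg x hx').derivWithin (uniqueDiffOn_Icc one_pos x hx')
    have hΩeq : ∀ x ∈ Set.Icc (0:ℝ) 1, δΩ x = C * Real.exp (μ * x) + K * Real.exp (ν * x) := by
      intro x hx
      have h1 := hgc x hx
      simp only [mul_zero, Real.exp_zero, mul_one] at h1
      rw [hC0] at h1
      have h3 : Real.exp (-μ * x) * Real.exp (μ * x) = 1 := by
        rw [← Real.exp_add]; simp
      have h4 := congrArg (fun t => t * Real.exp (μ * x)) h1
      rw [mul_assoc, h3, mul_one] at h4
      linear_combination h4
    have h7 : (∫ x in (0:ℝ)..1, δΩ x)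
        = (∫ x in (0:ℝ)..1, (C * Real.exp (μ * x) + K * Real.exp (ν * x))) := by
      apply intervalIntegral.integral_congr
      intro x hx
      exact hΩeq x (by rwa [Set.uIcc_of_le zero_le_one] at hx)
    rw [hfval, ← hI, ← h7, hint]
  · intro hF
    have hIone : (∫ x in (0:ℝ)..1, (C * Real.exp (μ * x) + K * Real.exp (ν * x))) = 1 := by
      rw [hI, ← hfval]; exact hF
    refine ⟨fun x => C * Real.exp (μ * x) + K * Real.exp (ν * x),
      fun x => C * μ * Real.exp (μ * x) + K * ν * Real.exp (ν * x), dA,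
      ?_, ?_, hIone, ?_, ?_, ?_⟩
    · intro x hx
      have hμx : HasDerivAt (fun y : ℝ => μ * y) μ x := by
        simpa using (hasDerivAt_id x).const_mul μ
      have hνx : HasDerivAt (fun y : ℝ => ν * y) ν x := by
        simpa using (hasDerivAt_id x).const_mul ν
      have h1 := (hμx.exp.const_mul C).add (hνx.exp.const_mul K)
      have h2 := h1.hasDerivWithinAt (s := Set.Icc (0:ℝ) 1)
      convert h2 using 1
      · rfl
      · rfl
      · rfl
      ring
    · exact ((continuous_const.mul (Real.continuous_exp.comp (continuous_const.mul
        continuous_id))).add (continuous_const.mul (Real.continuous_exp.comp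
        (continuous_const.mul continuous_id)))).continuousOn
    · intro x hx
      rw [show (b - bstar) * x / ρ = ν * x by rw [hνdef]; ring]
      linear_combination (C * Real.exp (μ * x)) * hρμ + (K * Real.exp (ν * x)) * hρν
        + Real.exp (ν * x) * hKl
    · have h' := hdAD
      rw [hDdef] at h'
      rw [hIone]
      linear_combination h'
    · rw [hIone]
      simp only [mul_zero, Real.exp_zero, mul_one]
      rw [hCdef]
      ring
end
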